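/- arXiv:2503.04448 — 5 statements merged into one kernel-verified Lean document; each statement's English description precedes it below -/
import Mathlib

section
/- Let ρ ∈ (0,1), let π be a bounded probability density on [0,1], and let c ≥ 0. Suppose g : [0,1]² → ℝ is a bounded measurable function satisfying, for all x, y ∈ [0,1], g(x,y) = ρ·π(y)·∫*_{u=x}^{y} [g(x,u) + g(y,u)] du + c·π(y)·∫*_{u=x}^{y} [ρ·π(u) + 1−ρ] du. Then for all x, y ∈ [0,1]: | g(x,y) − (c/(1−ρ))·π(y)·∫*_{u=x}^{y} π(u) du | ≤ (1+ρ)·π(y)·c. -/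
open MeasureTheory

/-- Circular integral: `∫*_{u=a}^{b} h(u) du` on the circle `[0,1)`.
It equals `∫_a^b h` if `a ≤ b` and `∫_a^1 h + ∫_0^b h` if `a > b`. -/
noncomputable def cint (a b : ℝ) (h : ℝ → ℝ) : ℝ :=
  if a ≤ b then ∫ u in a..b, h u
  else (∫ u in a..(1 : ℝ), h u) + ∫ u in (0 : ℝ)..b, h u

open Set

section cintBasic

lemma cint_of_le {h : ℝ → ℝ} {a b : ℝ} (hab : a ≤ b) :
    cint a b h = ∫ u in a..b, h u := by rw [cint, if_pos hab]

lemma cint_of_gt {h : ℝ → ℝ} {a b : ℝ} (hab : b < a) :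
    cint a b h = (∫ u in a..(1:ℝ), h u) + ∫ u in (0:ℝ)..b, h u := by
  rw [cint, if_neg (not_le.mpr hab)]

lemma II_of_Icc {f : ℝ → ℝ} (hf : IntegrableOn f (Icc (0:ℝ) 1))
    {a b : ℝ} (ha : a ∈ Icc (0:ℝ) 1) (hb : b ∈ Icc (0:ℝ) 1) :
    IntervalIntegrable f volume a b := by
  rw [intervalIntegrable_iff]
  refine hf.mono_set ?_
  refine (Set.uIoc_subset_uIcc).trans (Set.uIcc_subset_Icc ha hb)

lemma cint_congr {f g : ℝ → ℝ} {a b : ℝ} (ha : a ∈ Icc (0:ℝ) 1) (hb : b ∈ Icc (0:ℝ) 1)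
    (h : Set.EqOn f g (Icc (0:ℝ) 1)) : cint a b f = cint a b g := by
  unfold cint
  have e : ∀ c d : ℝ, c ∈ Icc (0:ℝ) 1 → d ∈ Icc (0:ℝ) 1 →
      (∫ u in c..d, f u) = ∫ u in c..d, g u := by
    intro c d hc hd
    refine intervalIntegral.integral_congr (h.mono ?_)
    exact Set.uIcc_subset_Icc hc hd
  split
  · exact e a b ha hb
  · rw [e a 1 ha (by norm_num), e 0 b (by norm_num) hb]

lemma cint_add {f g : ℝ → ℝ} {a b : ℝ} (ha : a ∈ Icc (0:ℝ) 1) (hb : b ∈ Icc (0:ℝ) 1)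
    (hf : IntegrableOn f (Icc (0:ℝ) 1)) (hg : IntegrableOn g (Icc (0:ℝ) 1)) :
    cint a b (fun u => f u + g u) = cint a b f + cint a b g := by
  have h1 : (1:ℝ) ∈ Icc (0:ℝ) 1 := by norm_num
  have h0 : (0:ℝ) ∈ Icc (0:ℝ) 1 := by norm_num
  unfold cint
  split
  · exact intervalIntegral.integral_add (II_of_Icc hf ha hb) (II_of_Icc hg ha hb)
  · rw [intervalIntegral.integral_add (II_of_Icc hf ha h1) (II_of_Icc hg ha h1),
      intervalIntegral.integral_add (II_of_Icc hf h0 hb) (II_of_Icc hg h0 hb)]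
    ring

lemma cint_smul (f : ℝ → ℝ) (r : ℝ) (a b : ℝ) :
    cint a b (fun u => r * f u) = r * cint a b f := by
  unfold cint
  split <;> simp [intervalIntegral.integral_const_mul, mul_add]

lemma cint_mono {f g : ℝ → ℝ} {a b : ℝ} (ha : a ∈ Icc (0:ℝ) 1) (hb : b ∈ Icc (0:ℝ) 1)
    (hf : IntegrableOn f (Icc (0:ℝ) 1)) (hg : IntegrableOn g (Icc (0:ℝ) 1))
    (hle : ∀ u ∈ Icc (0:ℝ) 1, f u ≤ g u) : cint a b f ≤ cint a b g := by
  have h1 : (1:ℝ) ∈ Icc (0:ℝ) 1 := by norm_num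
  have h0 : (0:ℝ) ∈ Icc (0:ℝ) 1 := by norm_num
  have e : ∀ c d : ℝ, c ∈ Icc (0:ℝ) 1 → d ∈ Icc (0:ℝ) 1 → c ≤ d →
      (∫ u in c..d, f u) ≤ ∫ u in c..d, g u := by
    intro c d hc hd hcd
    refine intervalIntegral.integral_mono_on hcd (II_of_Icc hf hc hd) (II_of_Icc hg hc hd) ?_
    intro u hu
    exact hle u ⟨le_trans hc.1 hu.1, le_trans hu.2 hd.2⟩
  unfold cint
  split
  · next hab => exact e a b ha hb hab
  · exact add_le_add (e a 1 ha h1 ha.2) (e 0 b h0 hb hb.1)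

lemma cint_abs_le {h : ℝ → ℝ} {a b C : ℝ} (ha : a ∈ Icc (0:ℝ) 1) (hb : b ∈ Icc (0:ℝ) 1)
    (hC : ∀ u ∈ Icc (0:ℝ) 1, |h u| ≤ C) : |cint a b h| ≤ 2 * C := by
  have hC0 : 0 ≤ C := le_trans (abs_nonneg _) (hC a ha)
  have key : ∀ c d : ℝ, c ∈ Icc (0:ℝ) 1 → d ∈ Icc (0:ℝ) 1 → |∫ u in c..d, h u| ≤ C := by
    intro c d hc hd
    have hb1 : ∀ u ∈ Set.uIoc c d, ‖h u‖ ≤ C := by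
      intro u hu
      have hu' : u ∈ Icc (0:ℝ) 1 :=
        Set.uIcc_subset_Icc hc hd (Set.uIoc_subset_uIcc hu)
      simpa [Real.norm_eq_abs] using hC u hu'
    have h2 := intervalIntegral.norm_integral_le_of_norm_le_const hb1
    rw [Real.norm_eq_abs] at h2
    have h3 : |d - c| ≤ 1 := by
      rw [abs_le]
      constructor <;> [linarith [hc.2, hd.1]; linarith [hc.1, hd.2]]
    calc |∫ u in c..d, h u| ≤ C * |d - c| := h2
      _ ≤ C * 1 := by exact mul_le_mul_of_nonneg_left h3 hC0
      _ = C := mul_one C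
  rcases le_or_gt a b with hab | hab
  · rw [cint_of_le hab]
    linarith [key a b ha hb]
  · rw [cint_of_gt hab]
    calc |(∫ u in a..(1:ℝ), h u) + ∫ u in (0:ℝ)..b, h u|
        ≤ |∫ u in a..(1:ℝ), h u| + |∫ u in (0:ℝ)..b, h u| := abs_add_le _ _
      _ ≤ 2 * C := by
          linarith [key a 1 ha (by norm_num : (1:ℝ) ∈ Icc (0:ℝ) 1),
            key 0 b (by norm_num : (0:ℝ) ∈ Icc (0:ℝ) 1) hb]

end cintBasic

lemma square_lemma {f : ℝ → ℝ} (hfi : Integrable f)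
    {a b : ℝ} (hab : a ≤ b) :
    (∫ u in a..b, f u * (∫ t in a..u, f t)) = (∫ u in a..b, f u)^2 / 2 := by
  set μ := volume.restrict (Ioc a b) with hμ
  have hIInt : ∀ c d : ℝ, IntervalIntegrable f volume c d := fun c d =>
    hfi.intervalIntegrable
  set F : ℝ → ℝ := fun u => ∫ t in a..u, f t with hF
  have hFc : Continuous F := intervalIntegral.continuous_primitive hIInt a
  set S : ℝ := ∫ u in a..b, f u with hS
  set φ : ℝ → ℝ → ℝ := fun u t => if t ≤ u then f u * f t else 0 with hφ
  have hφint : Integrable (Function.uncurry φ) (μ.prod μ) := by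
    have h1 : Integrable (fun p : ℝ × ℝ => f p.1 * f p.2) (μ.prod μ) :=
      Integrable.mul_prod (hfi.restrict) (hfi.restrict)
    have h2 : Function.uncurry φ =
        Set.indicator {p : ℝ × ℝ | p.2 ≤ p.1} (fun p => f p.1 * f p.2) := by
      funext p
      simp only [Function.uncurry, hφ, Set.indicator_apply, Set.mem_setOf_eq]
    rw [h2]
    exact h1.indicator (measurableSet_le measurable_snd measurable_fst)
  have hswap := MeasureTheory.integral_integral_swap hφint
  have hL : (∫ u, ∫ t, φ u t ∂μ ∂μ) = ∫ u in a..b, f u * F u := by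
    rw [intervalIntegral.integral_of_le hab]
    refine setIntegral_congr_fun measurableSet_Ioc ?_
    intro u hu
    show (∫ t, φ u t ∂μ) = f u * F u
    have : (fun t => φ u t) = (Iic u).indicator (fun t => f u * f t) := by
      funext t
      simp only [hφ, Set.indicator_apply, Set.mem_Iic]
    rw [this, MeasureTheory.integral_indicator measurableSet_Iic, hμ,
      Measure.restrict_restrict measurableSet_Iic]
    have hset : Iic u ∩ Ioc a b = Ioc a u := by
      ext t
      simp only [mem_inter_iff, mem_Iic, mem_Ioc]
      constructor
      · rintro ⟨h1, h2, h3⟩; exact ⟨h2, h1⟩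
      · rintro ⟨h1, h2⟩; exact ⟨h2, h1, h2.trans hu.2⟩
    rw [hset, MeasureTheory.integral_const_mul, hF,
      ← intervalIntegral.integral_of_le (le_of_lt hu.1)]
  have hR : (∫ t, ∫ u, φ u t ∂μ ∂μ) = ∫ t in a..b, f t * (S - F t) := by
    rw [intervalIntegral.integral_of_le hab]
    refine setIntegral_congr_fun measurableSet_Ioc ?_
    intro t ht
    show (∫ u, φ u t ∂μ) = f t * (S - F t)
    have : (fun u => φ u t) = (Ici t).indicator (fun u => f t * f u) := by
      funext u
      simp only [hφ, Set.indicator_apply, Set.mem_Ici]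
      split <;> [ring; rfl]
    rw [this, MeasureTheory.integral_indicator measurableSet_Ici, hμ,
      Measure.restrict_restrict measurableSet_Ici]
    have hset : Ici t ∩ Ioc a b = Icc t b := by
      ext u
      simp only [mem_inter_iff, mem_Ici, mem_Ioc, mem_Icc]
      constructor
      · rintro ⟨h1, h2, h3⟩; exact ⟨h1, h3⟩
      · rintro ⟨h1, h2⟩; exact ⟨h1, lt_of_lt_of_le ht.1 h1, h2⟩
    rw [hset, MeasureTheory.integral_const_mul, MeasureTheory.integral_Icc_eq_integral_Ioc,
      ← intervalIntegral.integral_of_le ht.2]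
    have hadj : F t + (∫ u in t..b, f u) = S := by
      rw [hF, hS]
      exact intervalIntegral.integral_add_adjacent_intervals (hIInt a t) (hIInt t b)
    have : (∫ u in t..b, f u) = S - F t := by linarith
    rw [this]
  have hmulint : IntervalIntegrable (fun t => f t * F t) volume a b :=
    (hIInt a b).mul_continuousOn hFc.continuousOn
  have hsplit : (∫ t in a..b, f t * (S - F t)) = S * S - ∫ t in a..b, f t * F t := by
    have : ∀ t, f t * (S - F t) = S * f t - f t * F t := fun t => by ring
    simp_rw [this]
    rw [intervalIntegral.integral_sub ((hIInt a b).const_mul S) hmulint,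
      intervalIntegral.integral_const_mul, ← hS]
  have key : (∫ u in a..b, f u * F u) = ∫ t in a..b, f t * (S - F t) := by
    rw [← hL, ← hR]; exact hswap
  rw [hsplit] at key
  have : (∫ u in a..b, f u * F u) = S * S / 2 := by linarith
  rw [hF] at this
  rw [this, hS]
  ring

section pi0
variable {f : ℝ → ℝ} (hm : Measurable f) (hnn : ∀ u, 0 ≤ f u) (hint : Integrable f)
include hnn hint

lemma intAbsBd (c d : ℝ) : |∫ u in c..d, f u| ≤ ∫ u, f u := by
  rcases le_total c d with h | h
  · rw [intervalIntegral.integral_of_le h, abs_of_nonneg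
      (setIntegral_nonneg measurableSet_Ioc (fun u _ => hnn u))]
    exact setIntegral_le_integral hint (Filter.Eventually.of_forall hnn)
  · rw [intervalIntegral.integral_of_ge h, abs_neg, abs_of_nonneg
      (setIntegral_nonneg measurableSet_Ioc (fun u _ => hnn u))]
    exact setIntegral_le_integral hint (Filter.Eventually.of_forall hnn)

lemma cintf_bd (x u : ℝ) : |cint x u f| ≤ 2 * ∫ t, f t := by
  unfold cint
  split
  · calc |∫ t in x..u, f t| ≤ ∫ t, f t := intAbsBd hnn hint x u
      _ ≤ 2 * ∫ t, f t := by
        have : (0:ℝ) ≤ ∫ t, f t := integral_nonneg hnn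
        linarith
  · calc |(∫ t in x..1, f t) + ∫ t in (0:ℝ)..u, f t|
        ≤ |∫ t in x..1, f t| + |∫ t in (0:ℝ)..u, f t| := abs_add_le _ _
      _ ≤ 2 * ∫ t, f t := by
        have h1 := intAbsBd hnn hint x 1
        have h2 := intAbsBd hnn hint 0 u
        linarith

omit hnn in
lemma cintf_meas (x : ℝ) : Measurable (fun u => cint x u f) := by
  unfold cint
  have hii : ∀ c d : ℝ, IntervalIntegrable f volume c d := fun c d => hint.intervalIntegrable
  have h1 : Continuous (fun u : ℝ => ∫ t in x..u, f t) := intervalIntegral.continuous_primitive hii x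
  have h2 : Continuous (fun u : ℝ => (∫ t in x..(1:ℝ), f t) + ∫ t in (0:ℝ)..u, f t) :=
    continuous_const.add (intervalIntegral.continuous_primitive hii 0)
  exact Measurable.ite (measurableSet_le measurable_const measurable_id) h1.measurable h2.measurable

include hm in
lemma mulcint_integrable (x : ℝ) : Integrable (fun u => f u * cint x u f) := by
  have h := hint.bdd_mul (cintf_meas hint x).aestronglyMeasurable
    (c := 2 * ∫ t, f t) (Filter.Eventually.of_forall fun u => by simpa using cintf_bd hnn hint x u)
  simpa [mul_comm] using h

omit hnn in
lemma mulprim_ii (c d e : ℝ) :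
    IntervalIntegrable (fun u => f u * ∫ t in c..u, f t) volume d e :=
  (hint.intervalIntegrable).mul_continuousOn
    (intervalIntegral.continuous_primitive (fun _ _ => hint.intervalIntegrable) c).continuousOn

omit hnn in
lemma eigen_x (hone : (∫ u in (0:ℝ)..1, f u) = 1) {x y : ℝ}
    (hx : x ∈ Icc (0:ℝ) 1) (hy : y ∈ Icc (0:ℝ) 1) :
    cint x y (fun u => f u * cint x u f) = (cint x y f)^2 / 2 := by
  have hii : ∀ c d : ℝ, IntervalIntegrable f volume c d := fun _ _ => hint.intervalIntegrable
  rcases le_or_gt x y with hab | hab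
  · rw [cint_of_le hab, cint_of_le hab]
    have hcong : (∫ u in x..y, f u * cint x u f) = ∫ u in x..y, f u * ∫ t in x..u, f t := by
      refine intervalIntegral.integral_congr ?_
      intro u hu
      rw [Set.uIcc_of_le hab] at hu
      show f u * cint x u f = f u * ∫ t in x..u, f t
      rw [cint_of_le hu.1]
    rw [hcong, square_lemma hint hab]
  · have hyx : y < x := hab
    rw [cint_of_gt hab, cint_of_gt hab]
    set A := ∫ u in x..(1:ℝ), f u with hA
    set B := ∫ u in (0:ℝ)..y, f u with hB
    have P1 : (∫ u in x..(1:ℝ), f u * cint x u f) = A^2/2 := by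
      have hcong : (∫ u in x..(1:ℝ), f u * cint x u f)
          = ∫ u in x..(1:ℝ), f u * ∫ t in x..u, f t := by
        refine intervalIntegral.integral_congr ?_
        intro u hu
        rw [Set.uIcc_of_le hx.2] at hu
        show f u * cint x u f = f u * ∫ t in x..u, f t
        rw [cint_of_le hu.1]
      rw [hcong, square_lemma hint hx.2]
    have P2 : (∫ u in (0:ℝ)..y, f u * cint x u f) = A*B + B^2/2 := by
      have hcong : (∫ u in (0:ℝ)..y, f u * cint x u f)
          = ∫ u in (0:ℝ)..y, (A * f u + f u * ∫ t in (0:ℝ)..u, f t) := by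
        refine intervalIntegral.integral_congr ?_
        intro u hu
        rw [Set.uIcc_of_le hy.1] at hu
        show f u * cint x u f = A * f u + f u * ∫ t in (0:ℝ)..u, f t
        rw [cint_of_gt (lt_of_le_of_lt hu.2 hyx)]
        ring
      rw [hcong, intervalIntegral.integral_add ((hii 0 y).const_mul A)
        (mulprim_ii hint 0 0 y), intervalIntegral.integral_const_mul,
        square_lemma hint hy.1]
    rw [P1, P2]; ring

omit hnn in
lemma eigen_y (hone : (∫ u in (0:ℝ)..1, f u) = 1) {x y : ℝ}
    (hx : x ∈ Icc (0:ℝ) 1) (hy : y ∈ Icc (0:ℝ) 1) :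
    cint x y (fun u => f u * cint y u f) = cint x y f - (cint x y f)^2 / 2 := by
  have hii : ∀ c d : ℝ, IntervalIntegrable f volume c d := fun _ _ => hint.intervalIntegrable
  have hney : ∀ᵐ (u : ℝ), u ≠ y := by simpa [ae_iff] using measure_singleton y
  rcases le_or_gt x y with hab | hab
  · rw [cint_of_le hab, cint_of_le hab]
    set I := ∫ u in x..y, f u with hI
    set c₁ := (∫ t in y..(1:ℝ), f t) + ∫ t in (0:ℝ)..x, f t with hc₁
    have hcong : (∫ u in x..y, f u * cint y u f)
        = ∫ u in x..y, (c₁ * f u + f u * ∫ t in x..u, f t) := by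
      refine intervalIntegral.integral_congr_ae (hney.mono ?_)
      intro u hne hu
      rw [Set.uIoc_of_le hab] at hu
      have hlt : u < y := lt_of_le_of_ne hu.2 hne
      show f u * cint y u f = c₁ * f u + f u * ∫ t in x..u, f t
      rw [cint_of_gt hlt]
      have hadd : (∫ t in (0:ℝ)..x, f t) + (∫ t in x..u, f t) = ∫ t in (0:ℝ)..u, f t :=
        intervalIntegral.integral_add_adjacent_intervals (hii 0 x) (hii x u)
      rw [← hadd]; ring
    rw [hcong, intervalIntegral.integral_add ((hii x y).const_mul c₁)
      (mulprim_ii hint x x y), intervalIntegral.integral_const_mul,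
      square_lemma hint hab]
    have hone' : c₁ = 1 - I := by
      have h1 : (∫ t in (0:ℝ)..x, f t) + (∫ t in x..y, f t) = ∫ t in (0:ℝ)..y, f t :=
        intervalIntegral.integral_add_adjacent_intervals (hii 0 x) (hii x y)
      have h2 : (∫ t in (0:ℝ)..y, f t) + (∫ t in y..(1:ℝ), f t) = ∫ t in (0:ℝ)..1, f t :=
        intervalIntegral.integral_add_adjacent_intervals (hii 0 y) (hii y 1)
      rw [hone] at h2
      rw [hc₁, hI]; linarith
    rw [hone']; ring
  · have hyx : y < x := hab
    rw [cint_of_gt hab, cint_of_gt hab]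
    set A := ∫ u in x..(1:ℝ), f u with hA
    set B := ∫ u in (0:ℝ)..y, f u with hB
    set c₂ := ∫ t in y..x, f t with hc₂
    set c₃ := ∫ t in y..(1:ℝ), f t with hc₃
    have P1 : (∫ u in x..(1:ℝ), f u * cint y u f) = c₂*A + A^2/2 := by
      have hcong : (∫ u in x..(1:ℝ), f u * cint y u f)
          = ∫ u in x..(1:ℝ), (c₂ * f u + f u * ∫ t in x..u, f t) := by
        refine intervalIntegral.integral_congr ?_
        intro u hu
        rw [Set.uIcc_of_le hx.2] at hu
        have hyu : y ≤ u := le_of_lt (lt_of_lt_of_le hyx hu.1)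
        show f u * cint y u f = c₂ * f u + f u * ∫ t in x..u, f t
        rw [cint_of_le hyu]
        have hadd : (∫ t in y..x, f t) + (∫ t in x..u, f t) = ∫ t in y..u, f t :=
          intervalIntegral.integral_add_adjacent_intervals (hii y x) (hii x u)
        rw [← hadd]; ring
      rw [hcong, intervalIntegral.integral_add ((hii x 1).const_mul c₂)
        (mulprim_ii hint x x 1), intervalIntegral.integral_const_mul,
        square_lemma hint hx.2]
    have P2 : (∫ u in (0:ℝ)..y, f u * cint y u f) = c₃*B + B^2/2 := by
      have hcong : (∫ u in (0:ℝ)..y, f u * cint y u f)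
          = ∫ u in (0:ℝ)..y, (c₃ * f u + f u * ∫ t in (0:ℝ)..u, f t) := by
        refine intervalIntegral.integral_congr_ae (hney.mono ?_)
        intro u hne hu
        rw [Set.uIoc_of_le hy.1] at hu
        have hlt : u < y := lt_of_le_of_ne hu.2 hne
        show f u * cint y u f = c₃ * f u + f u * ∫ t in (0:ℝ)..u, f t
        rw [cint_of_gt hlt]
        ring
      rw [hcong, intervalIntegral.integral_add ((hii 0 y).const_mul c₃)
        (mulprim_ii hint 0 0 y), intervalIntegral.integral_const_mul,
        square_lemma hint hy.1]
    have h1 : c₂ + A = c₃ :=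
      intervalIntegral.integral_add_adjacent_intervals (hii y x) (hii x 1)
    have h2 : B + c₃ = 1 := by
      have := intervalIntegral.integral_add_adjacent_intervals (hii 0 y) (hii y 1)
      rw [hone] at this; exact this
    rw [P1, P2]
    have hc2 : c₂ = 1 - B - A := by linarith
    have hc3 : c₃ = 1 - B := by linarith
    rw [hc2, hc3]; ring

end pi0

set_option maxHeartbeats 1000000 in
/-- Any bounded measurable solution `g` of the circular integral equation
`g(x,y) = ρπ(y)·∫*_{u=x}^{y} [g(x,u)+g(y,u)] du + c·π(y)·∫*_{u=x}^{y} [ρπ(u)+1−ρ] du`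
stays within distance `(1+ρ)·π(y)·c` of the transported uniform solution
`(c/(1−ρ))·π(y)·∫*_{u=x}^{y} π(u) du`. -/
theorem solution_close_to_uniform_solution
    (ρ : ℝ) (hρ : ρ ∈ Set.Ioo (0 : ℝ) 1)
    (π : ℝ → ℝ) (hπmeas : Measurable π)
    (hπnn : ∀ x ∈ Set.Icc (0 : ℝ) 1, 0 ≤ π x)
    (hπbd : ∃ M : ℝ, ∀ x ∈ Set.Icc (0 : ℝ) 1, π x ≤ M)
    (hπint : (∫ u in (0 : ℝ)..1, π u) = 1)
    (c : ℝ) (hc : 0 ≤ c)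
    (g : ℝ → ℝ → ℝ)
    (hgmeas : Measurable (Function.uncurry g))
    (hgbd : ∃ M : ℝ, ∀ x ∈ Set.Icc (0 : ℝ) 1, ∀ y ∈ Set.Icc (0 : ℝ) 1, |g x y| ≤ M)
    (heq : ∀ x ∈ Set.Icc (0 : ℝ) 1, ∀ y ∈ Set.Icc (0 : ℝ) 1,
      g x y = ρ * π y * cint x y (fun u => g x u + g y u)
        + c * π y * cint x y (fun u => ρ * π u + (1 - ρ))) :
    ∀ x ∈ Set.Icc (0 : ℝ) 1, ∀ y ∈ Set.Icc (0 : ℝ) 1,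
      |g x y - c / (1 - ρ) * π y * cint x y π| ≤ (1 + ρ) * π y * c := by
  obtain ⟨Mπ, hMπ⟩ := hπbd
  obtain ⟨Mg, hMg⟩ := hgbd
  have hρ0 : (0:ℝ) < ρ := hρ.1
  have hρ1 : ρ < 1 := hρ.2
  have h1ρ : (0:ℝ) < 1 - ρ := by linarith
  -- the truncated density
  set π₀ : ℝ → ℝ := (Icc (0:ℝ) 1).indicator π with hπ₀def
  have hπ₀eq : ∀ u ∈ Icc (0:ℝ) 1, π₀ u = π u := fun u hu => Set.indicator_of_mem hu π
  have hπ₀m : Measurable π₀ := hπmeas.indicator measurableSet_Icc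
  have hπ₀nn : ∀ u, 0 ≤ π₀ u := Set.indicator_nonneg (fun u hu => hπnn u hu)
  set M₀ : ℝ := max Mπ 0 with hM₀def
  have hM₀nn : (0:ℝ) ≤ M₀ := le_max_right _ _
  have hπ₀int : Integrable π₀ := by
    rw [hπ₀def, integrable_indicator_iff measurableSet_Icc]
    constructor
    · exact hπmeas.aestronglyMeasurable.restrict
    · apply HasFiniteIntegral.of_bounded (C := M₀)
      refine (ae_restrict_iff' measurableSet_Icc).mpr (Filter.Eventually.of_forall ?_)
      intro u hu
      rw [Real.norm_eq_abs, abs_of_nonneg (hπnn u hu)]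
      exact le_trans (hMπ u hu) (le_max_left _ _)
  have hπ₀one : (∫ u in (0:ℝ)..1, π₀ u) = 1 := by
    refine Eq.trans ?_ hπint
    refine intervalIntegral.integral_congr ?_
    intro u hu
    rw [Set.uIcc_of_le (by norm_num : (0:ℝ) ≤ 1)] at hu
    exact hπ₀eq u hu
  -- g is integrable in its second variable
  have hgmx : ∀ x : ℝ, Measurable (g x) := fun x => hgmeas.comp measurable_prodMk_left
  set Mg' : ℝ := max Mg 0 with hMg'def
  have hMg'nn : (0:ℝ) ≤ Mg' := le_max_right _ _
  have hgbd' : ∀ x ∈ Icc (0:ℝ) 1, ∀ u ∈ Icc (0:ℝ) 1, |g x u| ≤ Mg' :=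
    fun x hx u hu => le_trans (hMg x hx u hu) (le_max_left _ _)
  have hgInt : ∀ x ∈ Icc (0:ℝ) 1, IntegrableOn (g x) (Icc (0:ℝ) 1) := by
    intro x hx
    constructor
    · exact (hgmx x).aestronglyMeasurable.restrict
    · apply HasFiniteIntegral.of_bounded (C := Mg')
      refine (ae_restrict_iff' measurableSet_Icc).mpr (Filter.Eventually.of_forall ?_)
      intro u hu
      rw [Real.norm_eq_abs]
      exact hgbd' x hx u hu
  -- the normalized solution k
  set k : ℝ → ℝ → ℝ := fun x y =>
    ρ * cint x y (fun u => g x u + g y u) + c * cint x y (fun u => ρ * π u + (1 - ρ))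
    with hkdef
  have hgk : ∀ x ∈ Icc (0:ℝ) 1, ∀ u ∈ Icc (0:ℝ) 1, g x u = π₀ u * k x u := by
    intro x hx u hu
    rw [hπ₀eq u hu, heq x hx u hu]
    simp only [hkdef]
    ring
  -- bounds for the circular integral of π₀
  have hI : ∀ x ∈ Icc (0:ℝ) 1, ∀ y ∈ Icc (0:ℝ) 1,
      0 ≤ cint x y π₀ ∧ cint x y π₀ ≤ 1 := by
    intro x hx y hy
    have hii : ∀ c d : ℝ, IntervalIntegrable π₀ volume c d :=
      fun _ _ => hπ₀int.intervalIntegrable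
    have hnn' : ∀ c d : ℝ, c ≤ d → 0 ≤ ∫ u in c..d, π₀ u := fun c d h =>
      intervalIntegral.integral_nonneg h (fun u _ => hπ₀nn u)
    rcases le_or_gt x y with hab | hab
    · rw [cint_of_le hab]
      have a1 : (∫ u in (0:ℝ)..x, π₀ u) + (∫ u in x..y, π₀ u) = ∫ u in (0:ℝ)..y, π₀ u :=
        intervalIntegral.integral_add_adjacent_intervals (hii 0 x) (hii x y)
      have a2 : (∫ u in (0:ℝ)..y, π₀ u) + (∫ u in y..(1:ℝ), π₀ u) = ∫ u in (0:ℝ)..1, π₀ u :=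
        intervalIntegral.integral_add_adjacent_intervals (hii 0 y) (hii y 1)
      rw [hπ₀one] at a2
      refine ⟨hnn' x y hab, ?_⟩
      have b1 := hnn' 0 x hx.1
      have b2 := hnn' y 1 hy.2
      linarith
    · rw [cint_of_gt hab]
      have a1 : (∫ u in (0:ℝ)..y, π₀ u) + (∫ u in y..x, π₀ u) = ∫ u in (0:ℝ)..x, π₀ u :=
        intervalIntegral.integral_add_adjacent_intervals (hii 0 y) (hii y x)
      have a2 : (∫ u in (0:ℝ)..x, π₀ u) + (∫ u in x..(1:ℝ), π₀ u) = ∫ u in (0:ℝ)..1, π₀ u :=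
        intervalIntegral.integral_add_adjacent_intervals (hii 0 x) (hii x 1)
      rw [hπ₀one] at a2
      refine ⟨add_nonneg (hnn' x 1 hx.2) (hnn' 0 y hy.1), ?_⟩
      have b1 := hnn' y x (le_of_lt hab)
      linarith
  -- bounds for arc length
  have hΛ : ∀ x ∈ Icc (0:ℝ) 1, ∀ y ∈ Icc (0:ℝ) 1,
      0 ≤ cint x y (fun _ => (1:ℝ)) ∧ cint x y (fun _ => (1:ℝ)) ≤ 1 := by
    intro x hx y hy
    rcases le_or_gt x y with hab | hab
    · rw [cint_of_le hab]
      simp only [intervalIntegral.integral_const, smul_eq_mul, mul_one]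
      exact ⟨by linarith, by linarith [hx.1, hy.2]⟩
    · rw [cint_of_gt hab]
      simp only [intervalIntegral.integral_const, smul_eq_mul, mul_one]
      exact ⟨by linarith [hx.2, hy.1], by linarith [le_of_lt hab, hy.1, hx.2]⟩
  -- second integrand decomposition
  have hIccfin : volume (Icc (0:ℝ) 1) < ⊤ := by
    rw [Real.volume_Icc]; exact ENNReal.ofReal_lt_top
  have hC2 : ∀ x ∈ Icc (0:ℝ) 1, ∀ y ∈ Icc (0:ℝ) 1,
      cint x y (fun u => ρ * π u + (1 - ρ))
        = ρ * cint x y π₀ + (1 - ρ) * cint x y (fun _ => (1:ℝ)) := by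
    intro x hx y hy
    have h1 : cint x y (fun u => ρ * π u + (1 - ρ))
        = cint x y (fun u => ρ * π₀ u + (1 - ρ) * (1:ℝ)) := by
      refine cint_congr hx hy ?_
      intro u hu
      show ρ * π u + (1 - ρ) = ρ * π₀ u + (1 - ρ) * (1:ℝ)
      rw [hπ₀eq u hu]; ring
    rw [h1, cint_add hx hy (hπ₀int.const_mul ρ).integrableOn
      (integrableOn_const hIccfin.ne), cint_smul, cint_smul]
  -- the key computation from the eigen identities
  have hIi : ∀ x : ℝ, Integrable (fun u => π₀ u * cint x u π₀) :=
    fun x => mulcint_integrable hπ₀m hπ₀nn hπ₀int x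
  have hcompute : ∀ p q : ℝ, ∀ x ∈ Icc (0:ℝ) 1, ∀ y ∈ Icc (0:ℝ) 1,
      cint x y (fun u => π₀ u * (p * cint x u π₀ + q) + π₀ u * (p * cint y u π₀ + q))
        = (p + 2*q) * cint x y π₀ := by
    intro p q x hx y hy
    have hfx : (fun u => π₀ u * (p * cint x u π₀ + q) + π₀ u * (p * cint y u π₀ + q))
        = fun u => (p * (π₀ u * cint x u π₀))
            + ((p * (π₀ u * cint y u π₀)) + ((2*q) * π₀ u)) := by
      funext u; ring
    have i1 : IntegrableOn (fun u => p * (π₀ u * cint x u π₀)) (Icc (0:ℝ) 1) volume :=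
      ((hIi x).const_mul p).integrableOn
    have i2 : IntegrableOn (fun u => p * (π₀ u * cint y u π₀)) (Icc (0:ℝ) 1) volume :=
      ((hIi y).const_mul p).integrableOn
    have i3 : IntegrableOn (fun u => (2*q) * π₀ u) (Icc (0:ℝ) 1) volume :=
      (hπ₀int.const_mul (2*q)).integrableOn
    have i4 : IntegrableOn (fun u => p * (π₀ u * cint y u π₀) + (2*q) * π₀ u)
        (Icc (0:ℝ) 1) volume := i2.add i3
    have e1 := cint_add (f := fun u => p * (π₀ u * cint x u π₀))
      (g := fun u => p * (π₀ u * cint y u π₀) + (2*q) * π₀ u) hx hy i1 i4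
    have e2 := cint_add (f := fun u => p * (π₀ u * cint y u π₀))
      (g := fun u => (2*q) * π₀ u) hx hy i2 i3
    have e3 := cint_smul (fun u => π₀ u * cint x u π₀) p x y
    have e4 := cint_smul (fun u => π₀ u * cint y u π₀) p x y
    have e5 := cint_smul π₀ (2*q) x y
    rw [hfx, e1, e2, e3, e4, e5, eigen_x hπ₀int hπ₀one hx hy, eigen_y hπ₀int hπ₀one hx hy]
    ring
  -- the monotone improvement step (upper)
  have hstepU : ∀ p q : ℝ,
      (∀ x ∈ Icc (0:ℝ) 1, ∀ y ∈ Icc (0:ℝ) 1, k x y ≤ p * cint x y π₀ + q) →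
      ∀ x ∈ Icc (0:ℝ) 1, ∀ y ∈ Icc (0:ℝ) 1,
        k x y ≤ ρ * (p + 2*q + c) * cint x y π₀ + (1-ρ)*c := by
    intro p q hbd x hx y hy
    have hm1 : cint x y (fun u => g x u + g y u) ≤ (p + 2*q) * cint x y π₀ := by
      have heqn : cint x y (fun u => g x u + g y u)
          = cint x y (fun u => π₀ u * k x u + π₀ u * k y u) :=
        cint_congr hx hy (fun u hu => by
          show g x u + g y u = π₀ u * k x u + π₀ u * k y u
          rw [hgk x hx u hu, hgk y hy u hu])
      rw [heqn, ← hcompute p q x hx y hy]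
      refine cint_mono hx hy ?_ ?_ ?_
      · refine IntegrableOn.congr_fun ((hgInt x hx).add (hgInt y hy)) ?_ measurableSet_Icc
        intro u hu
        show g x u + g y u = π₀ u * k x u + π₀ u * k y u
        rw [hgk x hx u hu, hgk y hy u hu]
      · have hfe : (fun u => π₀ u * (p * cint x u π₀ + q) + π₀ u * (p * cint y u π₀ + q))
            = fun u => (p * (π₀ u * cint x u π₀))
              + ((p * (π₀ u * cint y u π₀)) + ((2*q) * π₀ u)) := by
          funext u; ring
        rw [hfe]
        have i1 : IntegrableOn (fun u => p * (π₀ u * cint x u π₀)) (Icc (0:ℝ) 1) volume :=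
          ((hIi x).const_mul p).integrableOn
        have i2 : IntegrableOn (fun u => p * (π₀ u * cint y u π₀)) (Icc (0:ℝ) 1) volume :=
          ((hIi y).const_mul p).integrableOn
        have i3 : IntegrableOn (fun u => (2*q) * π₀ u) (Icc (0:ℝ) 1) volume :=
          (hπ₀int.const_mul (2*q)).integrableOn
        exact i1.add (i2.add i3)
      · intro u hu
        exact add_le_add (mul_le_mul_of_nonneg_left (hbd x hx u hu) (hπ₀nn u))
          (mul_le_mul_of_nonneg_left (hbd y hy u hu) (hπ₀nn u))
    have hm2 : c * cint x y (fun u => ρ * π u + (1 - ρ))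
        ≤ c * ρ * cint x y π₀ + (1-ρ)*c := by
      rw [hC2 x hx y hy]
      have hl1 := (hΛ x hx y hy).2
      have hl0 := (hΛ x hx y hy).1
      nlinarith [mul_nonneg (mul_nonneg h1ρ.le hc) (sub_nonneg.mpr hl1)]
    have hk0 : k x y = ρ * cint x y (fun u => g x u + g y u)
        + c * cint x y (fun u => ρ * π u + (1 - ρ)) := rfl
    rw [hk0]
    have hmul := mul_le_mul_of_nonneg_left hm1 (le_of_lt hρ0)
    have hre : ρ * ((p + 2*q) * cint x y π₀) + (c * ρ * cint x y π₀ + (1-ρ)*c)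
        = ρ * (p + 2*q + c) * cint x y π₀ + (1-ρ)*c := by ring
    linarith
  -- the monotone improvement step (lower)
  have hstepL : ∀ p q : ℝ,
      (∀ x ∈ Icc (0:ℝ) 1, ∀ y ∈ Icc (0:ℝ) 1, p * cint x y π₀ + q ≤ k x y) →
      ∀ x ∈ Icc (0:ℝ) 1, ∀ y ∈ Icc (0:ℝ) 1,
        ρ * (p + 2*q + c) * cint x y π₀ ≤ k x y := by
    intro p q hbd x hx y hy
    have hm1 : (p + 2*q) * cint x y π₀ ≤ cint x y (fun u => g x u + g y u) := by
      have heqn : cint x y (fun u => g x u + g y u)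
          = cint x y (fun u => π₀ u * k x u + π₀ u * k y u) :=
        cint_congr hx hy (fun u hu => by
          show g x u + g y u = π₀ u * k x u + π₀ u * k y u
          rw [hgk x hx u hu, hgk y hy u hu])
      rw [heqn, ← hcompute p q x hx y hy]
      refine cint_mono hx hy ?_ ?_ ?_
      · have hfe : (fun u => π₀ u * (p * cint x u π₀ + q) + π₀ u * (p * cint y u π₀ + q))
            = fun u => (p * (π₀ u * cint x u π₀))
              + ((p * (π₀ u * cint y u π₀)) + ((2*q) * π₀ u)) := by
          funext u; ring
        rw [hfe]
        have i1 : IntegrableOn (fun u => p * (π₀ u * cint x u π₀)) (Icc (0:ℝ) 1) volume :=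
          ((hIi x).const_mul p).integrableOn
        have i2 : IntegrableOn (fun u => p * (π₀ u * cint y u π₀)) (Icc (0:ℝ) 1) volume :=
          ((hIi y).const_mul p).integrableOn
        have i3 : IntegrableOn (fun u => (2*q) * π₀ u) (Icc (0:ℝ) 1) volume :=
          (hπ₀int.const_mul (2*q)).integrableOn
        exact i1.add (i2.add i3)
      · refine IntegrableOn.congr_fun ((hgInt x hx).add (hgInt y hy)) ?_ measurableSet_Icc
        intro u hu
        show g x u + g y u = π₀ u * k x u + π₀ u * k y u
        rw [hgk x hx u hu, hgk y hy u hu]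
      · intro u hu
        exact add_le_add (mul_le_mul_of_nonneg_left (hbd x hx u hu) (hπ₀nn u))
          (mul_le_mul_of_nonneg_left (hbd y hy u hu) (hπ₀nn u))
    have hm2 : c * ρ * cint x y π₀ ≤ c * cint x y (fun u => ρ * π u + (1 - ρ)) := by
      rw [hC2 x hx y hy]
      have hl0 := (hΛ x hx y hy).1
      nlinarith [mul_nonneg (mul_nonneg h1ρ.le hc) hl0]
    have hk0 : k x y = ρ * cint x y (fun u => g x u + g y u)
        + c * cint x y (fun u => ρ * π u + (1 - ρ)) := rfl
    rw [hk0]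
    have hmul := mul_le_mul_of_nonneg_left hm1 (le_of_lt hρ0)
    have hre : ρ * ((p + 2*q) * cint x y π₀) + c * ρ * cint x y π₀
        = ρ * (p + 2*q + c) * cint x y π₀ := by ring
    linarith
  -- a priori bound on k
  set K₀ : ℝ := ρ * (2*(2*Mg')) + c * (2*(ρ*M₀+1)) with hK₀def
  have hK0 : ∀ x ∈ Icc (0:ℝ) 1, ∀ y ∈ Icc (0:ℝ) 1, |k x y| ≤ K₀ := by
    intro x hx y hy
    have hb1 : |cint x y (fun u => g x u + g y u)| ≤ 2*(2*Mg') := by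
      refine cint_abs_le hx hy ?_
      intro u hu
      calc |g x u + g y u| ≤ |g x u| + |g y u| := abs_add_le _ _
        _ ≤ 2*Mg' := by linarith [hgbd' x hx u hu, hgbd' y hy u hu]
    have hb2 : |cint x y (fun u => ρ * π u + (1 - ρ))| ≤ 2*(ρ*M₀+1) := by
      refine cint_abs_le hx hy ?_
      intro u hu
      have hπu0 := hπnn u hu
      have hπuM : π u ≤ M₀ := le_trans (hMπ u hu) (le_max_left _ _)
      rw [abs_le]
      constructor
      · nlinarith
      · nlinarith
    have habs : |k x y| ≤ ρ * |cint x y (fun u => g x u + g y u)|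
        + c * |cint x y (fun u => ρ * π u + (1 - ρ))| := by
      have hk0 : k x y = ρ * cint x y (fun u => g x u + g y u)
          + c * cint x y (fun u => ρ * π u + (1 - ρ)) := rfl
      rw [hk0]
      calc |ρ * cint x y (fun u => g x u + g y u)
            + c * cint x y (fun u => ρ * π u + (1 - ρ))|
          ≤ |ρ * cint x y (fun u => g x u + g y u)|
            + |c * cint x y (fun u => ρ * π u + (1 - ρ))| := abs_add_le _ _
        _ = ρ * |cint x y (fun u => g x u + g y u)|
            + c * |cint x y (fun u => ρ * π u + (1 - ρ))| := by
            rw [abs_mul, abs_mul, abs_of_nonneg (le_of_lt hρ0), abs_of_nonneg hc]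
    have h1 := mul_le_mul_of_nonneg_left hb1 (le_of_lt hρ0)
    have h2 := mul_le_mul_of_nonneg_left hb2 hc
    rw [hK₀def]
    linarith
  have hK0nn : (0:ℝ) ≤ K₀ := le_trans (abs_nonneg _) (hK0 0 (by norm_num) 0 (by norm_num))
  -- upper fixed point iteration
  set U : ℝ := ρ*(3-2*ρ)*c/(1-ρ) with hUdef
  have hU : (1-ρ) * U = ρ*(3-2*ρ)*c := by
    rw [hUdef]; field_simp
  have hbase : ∀ x ∈ Icc (0:ℝ) 1, ∀ y ∈ Icc (0:ℝ) 1,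
      k x y ≤ (ρ * (0 + 2*K₀ + c)) * cint x y π₀ + (1-ρ)*c := by
    refine hstepU 0 K₀ ?_
    intro x hx y hy
    have := (abs_le.mp (hK0 x hx y hy)).2
    rw [zero_mul, zero_add]
    exact this
  set p₁ : ℝ := ρ * (0 + 2*K₀ + c) with hp₁def
  set E : ℝ := max (p₁ - U) 0 with hEdef
  have hEnn : (0:ℝ) ≤ E := le_max_right _ _
  have hind : ∀ n : ℕ, ∀ x ∈ Icc (0:ℝ) 1, ∀ y ∈ Icc (0:ℝ) 1,
      k x y ≤ (U + ρ^n * E) * cint x y π₀ + (1-ρ)*c := by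
    intro n
    induction n with
    | zero =>
      intro x hx y hy
      have hb := hbase x hx y hy
      have hp : p₁ ≤ U + ρ^0 * E := by
        rw [pow_zero, one_mul]
        have := le_max_left (p₁ - U) 0
        rw [← hEdef] at this
        linarith
      have hI0 := (hI x hx y hy).1
      have := mul_le_mul_of_nonneg_right hp hI0
      linarith
    | succ n ih =>
      intro x hx y hy
      have h2 := hstepU (U + ρ^n * E) ((1-ρ)*c) ih x hx y hy
      have hco : ρ * ((U + ρ^n*E) + 2*((1-ρ)*c) + c) = U + ρ^(n+1)*E :=
        calc ρ * ((U + ρ^n*E) + 2*((1-ρ)*c) + c)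
            = ρ*U + ρ*(3-2*ρ)*c + ρ^(n+1)*E := by ring
          _ = U + ρ^(n+1)*E := by linarith
      rw [hco] at h2
      exact h2
  have hupper : ∀ x ∈ Icc (0:ℝ) 1, ∀ y ∈ Icc (0:ℝ) 1,
      k x y ≤ U * cint x y π₀ + (1-ρ)*c := by
    intro x hx y hy
    have hlim : Filter.Tendsto (fun n : ℕ => ρ^n * E) Filter.atTop (nhds 0) := by
      have := (tendsto_pow_atTop_nhds_zero_of_lt_one (le_of_lt hρ0) hρ1).mul_const E
      simpa using this
    have hle : k x y - (U * cint x y π₀ + (1-ρ)*c) ≤ 0 := by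
      refine ge_of_tendsto hlim (Filter.Eventually.of_forall ?_)
      intro n
      have h3 := hind n x hx y hy
      have hI1 := (hI x hx y hy).2
      have hpn : (0:ℝ) ≤ ρ^n * E := mul_nonneg (pow_nonneg (le_of_lt hρ0) n) hEnn
      have e1 : (U + ρ^n*E) * cint x y π₀ = U * cint x y π₀ + ρ^n*E * cint x y π₀ := by
        ring
      have e2 := mul_le_mul_of_nonneg_left hI1 hpn
      rw [mul_one] at e2
      linarith
    linarith
  -- lower fixed point iteration
  set Lo : ℝ := ρ*c/(1-ρ) with hLodef
  have hLo : (1-ρ) * Lo = ρ*c := by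
    rw [hLodef]; field_simp
  have hbase' : ∀ x ∈ Icc (0:ℝ) 1, ∀ y ∈ Icc (0:ℝ) 1,
      (ρ * (0 + 2*(-K₀) + c)) * cint x y π₀ ≤ k x y := by
    refine hstepL 0 (-K₀) ?_
    intro x hx y hy
    have := (abs_le.mp (hK0 x hx y hy)).1
    rw [zero_mul, zero_add]
    linarith
  set p₂ : ℝ := ρ * (0 + 2*(-K₀) + c) with hp₂def
  set E' : ℝ := max (Lo - p₂) 0 with hE'def
  have hE'nn : (0:ℝ) ≤ E' := le_max_right _ _
  have hind' : ∀ n : ℕ, ∀ x ∈ Icc (0:ℝ) 1, ∀ y ∈ Icc (0:ℝ) 1,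
      (Lo - ρ^n * E') * cint x y π₀ ≤ k x y := by
    intro n
    induction n with
    | zero =>
      intro x hx y hy
      have hb := hbase' x hx y hy
      have hp : Lo - ρ^0 * E' ≤ p₂ := by
        rw [pow_zero, one_mul]
        have := le_max_left (Lo - p₂) 0
        rw [← hE'def] at this
        linarith
      have hI0 := (hI x hx y hy).1
      have := mul_le_mul_of_nonneg_right hp hI0
      linarith
    | succ n ih =>
      intro x hx y hy
      have h2 := hstepL (Lo - ρ^n * E') 0
        (fun x' hx' y' hy' => by linarith [ih x' hx' y' hy']) x hx y hy
      have hco : ρ * ((Lo - ρ^n*E') + 2*0 + c) = Lo - ρ^(n+1)*E' :=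
        calc ρ * ((Lo - ρ^n*E') + 2*0 + c)
            = ρ*Lo + ρ*c - ρ^(n+1)*E' := by ring
          _ = Lo - ρ^(n+1)*E' := by linarith
      rw [hco] at h2
      exact h2
  have hlower : ∀ x ∈ Icc (0:ℝ) 1, ∀ y ∈ Icc (0:ℝ) 1,
      Lo * cint x y π₀ ≤ k x y := by
    intro x hx y hy
    have hlim : Filter.Tendsto (fun n : ℕ => ρ^n * E') Filter.atTop (nhds 0) := by
      have := (tendsto_pow_atTop_nhds_zero_of_lt_one (le_of_lt hρ0) hρ1).mul_const E'
      simpa using this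
    have hle : Lo * cint x y π₀ - k x y ≤ 0 := by
      refine ge_of_tendsto hlim (Filter.Eventually.of_forall ?_)
      intro n
      have h3 := hind' n x hx y hy
      have hI1 := (hI x hx y hy).2
      have hpn : (0:ℝ) ≤ ρ^n * E' := mul_nonneg (pow_nonneg (le_of_lt hρ0) n) hE'nn
      have e1 : (Lo - ρ^n*E') * cint x y π₀ = Lo * cint x y π₀ - ρ^n*E' * cint x y π₀ := by
        ring
      have e2 := mul_le_mul_of_nonneg_left hI1 hpn
      rw [mul_one] at e2
      linarith
    linarith
  -- conclusion
  clear_value U Lo k K₀ E E' p₁ p₂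
  intro x hx y hy
  have hIxy := hI x hx y hy
  have hgy : g x y = π y * k x y := by
    rw [← hπ₀eq y hy]
    exact hgk x hx y hy
  have hcπ : cint x y π = cint x y π₀ :=
    cint_congr hx hy (fun u hu => (hπ₀eq u hu).symm)
  have hD : (1-ρ) * (c / (1-ρ)) = c := by field_simp
  have hUD : U - c/(1-ρ) = (2*ρ-1)*c := by
    have h' : (1-ρ)*(U - c/(1-ρ)) = (1-ρ)*((2*ρ-1)*c) := by
      rw [mul_sub, hU, hD]; ring
    exact mul_left_cancel₀ (ne_of_gt h1ρ) h'
  have hDLo : c/(1-ρ) - Lo = c := by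
    have h' : (1-ρ)*(c/(1-ρ) - Lo) = (1-ρ)*c := by
      rw [mul_sub, hD, hLo]; ring
    exact mul_left_cancel₀ (ne_of_gt h1ρ) h'
  have habs : |k x y - c/(1-ρ) * cint x y π₀| ≤ (1+ρ)*c := by
    rw [abs_le]
    constructor
    · have hl := hlower x hx y hy
      have e := sub_mul (c/(1-ρ)) Lo (cint x y π₀)
      rw [hDLo] at e
      have e2 := mul_le_mul_of_nonneg_left hIxy.2 hc
      rw [mul_one] at e2
      linarith [mul_nonneg (le_of_lt hρ0) hc]
    · have hu := hupper x hx y hy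
      have e := sub_mul U (c/(1-ρ)) (cint x y π₀)
      rw [hUD] at e
      linarith [mul_nonneg (mul_nonneg hc (le_of_lt hρ0)) (sub_nonneg.mpr hIxy.2),
        mul_nonneg hc hIxy.1]
  calc |g x y - c / (1 - ρ) * π y * cint x y π|
      = |π y * (k x y - c/(1-ρ) * cint x y π₀)| := by
        rw [hgy, hcπ, show π y * k x y - c / (1-ρ) * π y * cint x y π₀
          = π y * (k x y - c/(1-ρ) * cint x y π₀) from by ring]
    _ = π y * |k x y - c/(1-ρ) * cint x y π₀| := by
        rw [abs_mul, abs_of_nonneg (hπnn y hy)]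
    _ ≤ π y * ((1+ρ)*c) := mul_le_mul_of_nonneg_left habs (hπnn y hy)
    _ = (1 + ρ) * π y * c := by ring
end

section
/- Let π be a bounded probability density on [0,1] and let κ ≥ 0. For each ρ ∈ (0,1), let g_ρ : [0,1]² → ℝ be a bounded measurable function satisfying, for all x, y ∈ [0,1], g_ρ(x,y) = ρ·π(y)·∫*_{u=x}^{y} [g_ρ(x,u) + g_ρ(y,u)] du + ρ·κ·π(y)·∫*_{u=x}^{y} [ρ·π(u) + 1−ρ] du. Then for every x, y ∈ [0,1]: lim_{ρ → 1⁻} (1−ρ)·g_ρ(x,y) = κ·π(y)·∫*_{u=x}^{y} π(u) du. -/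
open MeasureTheory

open Set


lemma HTbddIntOn {h : ℝ → ℝ} {s : Set ℝ} (hm : Measurable h) {C : ℝ}
    (hb : ∀ u ∈ s, |h u| ≤ C) (hs : MeasurableSet s) (hfin : volume s < ⊤) :
    IntegrableOn h s := by
  haveI : IsFiniteMeasure (volume.restrict s) :=
    ⟨by rwa [Measure.restrict_apply_univ]⟩
  refine Integrable.mono' (integrable_const C) hm.aestronglyMeasurable.restrict ?_
  rw [ae_restrict_iff' hs]
  exact ae_of_all _ fun u hu => by simpa using hb u hu

lemma HTsym {f : ℝ → ℝ} (hm : Measurable f) (h0 : ∀ u, 0 ≤ f u) {C : ℝ}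
    (hC : ∀ u, f u ≤ C) (hint : Integrable f) {a b : ℝ} (hab : a ≤ b) :
    ∫ u in Ioc a b, f u * ∫ v in Ioc a u, f v
      = (∫ u in Ioc a b, f u) ^ 2 / 2 := by
  set S := Ioc a b with hS
  haveI hSfin : IsFiniteMeasure (volume.restrict S) :=
    ⟨by rw [Measure.restrict_apply_univ]; exact measure_Ioc_lt_top⟩
  have hC0 : 0 ≤ C := le_trans (h0 0) (hC 0)
  set Φ : ℝ × ℝ → ℝ := fun p => if p.2 ≤ p.1 then f p.1 * f p.2 else 0 with hΦ
  have hΦm : Measurable Φ := by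
    exact Measurable.ite (measurableSet_le measurable_snd measurable_fst)
      ((hm.comp measurable_fst).mul (hm.comp measurable_snd)) measurable_const
  have hΦint : Integrable Φ ((volume.restrict S).prod (volume.restrict S)) := by
    refine Integrable.mono' (integrable_const (C * C)) hΦm.aestronglyMeasurable ?_
    refine ae_of_all _ fun p => ?_
    simp only [hΦ, Real.norm_eq_abs]
    split_ifs
    · rw [abs_of_nonneg (mul_nonneg (h0 _) (h0 _))]
      exact mul_le_mul (hC _) (hC _) (h0 _) hC0
    · simpa using mul_nonneg hC0 hC0
  have hmono : Monotone (fun u => ∫ v in Ioc a u, f v) := by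
    intro u u' huu'
    refine setIntegral_mono_set hint.integrableOn (ae_of_all _ h0) ?_
    exact HasSubset.Subset.eventuallyLE (Ioc_subset_Ioc_right huu')
  have hmono2 : Antitone (fun u => ∫ v in Ioc u b, f v) := by
    intro u u' huu'
    refine setIntegral_mono_set hint.integrableOn (ae_of_all _ h0) ?_
    exact HasSubset.Subset.eventuallyLE (Ioc_subset_Ioc_left huu')
  set T : ℝ := ∫ v, f v with hT
  have hsetle : ∀ s : Set ℝ, ∫ v in s, f v ≤ T :=
    fun s => setIntegral_le_integral hint (ae_of_all _ h0)
  have hsetnn : ∀ s : Set ℝ, 0 ≤ ∫ v in s, f v :=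
    fun s => integral_nonneg h0
  have hint1 : IntegrableOn (fun u => f u * ∫ v in Ioc a u, f v) S := by
    refine HTbddIntOn (hm.mul hmono.measurable) (C := C * T) (fun u _ => ?_)
      measurableSet_Ioc measure_Ioc_lt_top
    rw [abs_of_nonneg (mul_nonneg (h0 _) (hsetnn _))]
    exact mul_le_mul (hC _) (hsetle _) (hsetnn _) hC0
  have hint2 : IntegrableOn (fun u => f u * ∫ v in Ioc u b, f v) S := by
    refine HTbddIntOn (hm.mul hmono2.measurable) (C := C * T) (fun u _ => ?_)
      measurableSet_Ioc measure_Ioc_lt_top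
    rw [abs_of_nonneg (mul_nonneg (h0 _) (hsetnn _))]
    exact mul_le_mul (hC _) (hsetle _) (hsetnn _) hC0
  have key1 : ∀ u ∈ S, f u * ∫ v in Ioc a u, f v = ∫ v in S, Φ (u, v) := by
    intro u hu
    have e1 : (fun v => Φ (u, v)) = (Iic u).indicator (fun v => f u * f v) := by
      funext v
      simp only [hΦ, Set.indicator_apply, Set.mem_Iic]
    rw [e1, integral_indicator measurableSet_Iic,
      Measure.restrict_restrict measurableSet_Iic, Set.inter_comm,
      Set.Ioc_inter_Iic, min_eq_right hu.2, integral_const_mul]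
  have key2 : ∀ v ∈ S, (∫ u in S, Φ (u, v)) = f v * ∫ u in Ioc v b, f u := by
    intro v hv
    have hne : ∀ᵐ u : ℝ ∂(volume.restrict S), u ≠ v := by
      have h1 : ∀ᵐ u : ℝ, u ≠ v := by
        rw [ae_iff]
        simpa using measure_singleton (α := ℝ) v
      exact h1.filter_mono (ae_mono Measure.restrict_le_self)
    have e1 : (fun u => Φ (u, v)) =ᵐ[volume.restrict S]
        (Ioi v).indicator (fun u => f v * f u) := by
      refine hne.mono fun u huv => ?_
      simp only [hΦ, Set.indicator_apply, Set.mem_Ioi]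
      rcases le_or_gt u v with h | h
      · have : ¬ v < u := not_lt.2 h
        rw [if_neg this]
        have : ¬ v ≤ u := fun hle => huv (le_antisymm h hle)
        rw [if_neg this]
      · rw [if_pos h.le, if_pos h, mul_comm]
    rw [integral_congr_ae e1, integral_indicator measurableSet_Ioi,
      Measure.restrict_restrict measurableSet_Ioi, Set.inter_comm,
      Set.Ioc_inter_Ioi, max_eq_right hv.1.le, integral_const_mul]
  have hswap : ∫ u in S, ∫ v in S, Φ (u, v) = ∫ v in S, ∫ u in S, Φ (u, v) := by
    apply integral_integral_swap
    exact hΦint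
  have hA : ∫ u in S, f u * ∫ v in Ioc a u, f v = ∫ u in S, ∫ v in S, Φ (u, v) :=
    setIntegral_congr_fun measurableSet_Ioc key1
  have hB : (∫ v in S, ∫ u in S, Φ (u, v)) = ∫ v in S, f v * ∫ u in Ioc v b, f u :=
    setIntegral_congr_fun measurableSet_Ioc key2
  have hAB : ∫ u in S, f u * ∫ v in Ioc a u, f v
      = ∫ u in S, f u * ∫ v in Ioc u b, f v := by
    rw [hA, hswap, hB]
  have hsum : (∫ u in S, f u * ∫ v in Ioc a u, f v)
      + ∫ u in S, f u * ∫ v in Ioc u b, f v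
      = (∫ u in S, f u) * ∫ u in S, f u := by
    rw [← integral_add hint1 hint2]
    have : ∀ u ∈ S, f u * (∫ v in Ioc a u, f v) + f u * (∫ v in Ioc u b, f v)
        = f u * ∫ v in S, f v := by
      intro u hu
      rw [← mul_add]
      congr 1
      rw [← setIntegral_union (Set.Ioc_disjoint_Ioc_of_le le_rfl) measurableSet_Ioc
        hint.integrableOn hint.integrableOn,
        Set.Ioc_union_Ioc_eq_Ioc hu.1.le hu.2]
    rw [setIntegral_congr_fun measurableSet_Ioc this, integral_mul_const]
  rw [hAB] at hsum
  rw [sq]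
  linarith

noncomputable def HTG (f : ℝ → ℝ) (u : ℝ) : ℝ := ∫ v in Set.Ioc (0:ℝ) u, f v

noncomputable def HTPi (f : ℝ → ℝ) (a u : ℝ) : ℝ :=
  if a ≤ u then HTG f u - HTG f a else 1 - HTG f a + HTG f u

def HTArc (a b : ℝ) : Set ℝ :=
  if a ≤ b then Set.Ioc a b else Set.Ioc a 1 ∪ Set.Ioc 0 b

lemma HTG_mono {f : ℝ → ℝ} (h0 : ∀ u, 0 ≤ f u) (hint : Integrable f) :
    Monotone (HTG f) := by
  intro u u' h
  exact setIntegral_mono_set hint.integrableOn (ae_of_all _ h0)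
    (HasSubset.Subset.eventuallyLE (Ioc_subset_Ioc_right h))

lemma HTG_meas {f : ℝ → ℝ} (h0 : ∀ u, 0 ≤ f u) (hint : Integrable f) :
    Measurable (HTG f) := (HTG_mono h0 hint).measurable

lemma HTG_zero (f : ℝ → ℝ) : HTG f 0 = 0 := by simp [HTG]

lemma HTG_nonneg {f : ℝ → ℝ} (h0 : ∀ u, 0 ≤ f u) (u : ℝ) : 0 ≤ HTG f u :=
  integral_nonneg h0

lemma HTG_add {f : ℝ → ℝ} (hint : Integrable f) {a u : ℝ} (ha : 0 ≤ a) (hau : a ≤ u) :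
    HTG f u = HTG f a + ∫ v in Ioc a u, f v := by
  rw [HTG, HTG, ← setIntegral_union (Set.Ioc_disjoint_Ioc_of_le le_rfl) measurableSet_Ioc
    hint.integrableOn hint.integrableOn, Set.Ioc_union_Ioc_eq_Ioc ha hau]

lemma HTPi_meas {f : ℝ → ℝ} (h0 : ∀ u, 0 ≤ f u) (hint : Integrable f) (a : ℝ) :
    Measurable (HTPi f a) := by
  unfold HTPi
  exact Measurable.ite measurableSet_Ici
    ((HTG_meas h0 hint).sub measurable_const)
    ((measurable_const.sub measurable_const).add (HTG_meas h0 hint))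

lemma HTArc_meas (a b : ℝ) : MeasurableSet (HTArc a b) := by
  unfold HTArc; split_ifs
  · exact measurableSet_Ioc
  · exact measurableSet_Ioc.union measurableSet_Ioc

lemma HTArc_subset {a b : ℝ} (ha : a ∈ Icc (0:ℝ) 1) (hb : b ∈ Icc (0:ℝ) 1) :
    HTArc a b ⊆ Ioc (0:ℝ) 1 := by
  unfold HTArc; split_ifs
  · exact fun u hu => ⟨lt_of_le_of_lt ha.1 hu.1, le_trans hu.2 hb.2⟩
  · rintro u (hu | hu)
    · exact ⟨lt_of_le_of_lt ha.1 hu.1, hu.2⟩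
    · exact ⟨hu.1, le_trans hu.2 hb.2⟩

lemma HTJ {f : ℝ → ℝ} (hm : Measurable f) (h0 : ∀ u, 0 ≤ f u) (hint : Integrable f)
    {C : ℝ} (hC : ∀ u, f u ≤ C) {a b : ℝ} (ha : 0 ≤ a) (hab : a ≤ b) :
    ∫ u in Ioc a b, f u * HTG f u = (HTG f b ^ 2 - HTG f a ^ 2) / 2 := by
  have hsub : ∫ u in Ioc a b, f u = HTG f b - HTG f a := by
    rw [HTG_add hint ha hab]; ring
  have e1 : ∀ u ∈ Ioc a b, f u * HTG f u
      = f u * HTG f a + f u * ∫ v in Ioc a u, f v := by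
    intro u hu
    rw [HTG_add hint ha hu.1.le]; ring
  rw [setIntegral_congr_fun measurableSet_Ioc e1]
  have hmono : Monotone (fun u => ∫ v in Ioc a u, f v) := by
    intro u u' h
    exact setIntegral_mono_set hint.integrableOn (ae_of_all _ h0)
      (HasSubset.Subset.eventuallyLE (Ioc_subset_Ioc_right h))
  have hC0 : 0 ≤ C := le_trans (h0 0) (hC 0)
  have hsetle : ∀ s : Set ℝ, ∫ v in s, f v ≤ ∫ v, f v :=
    fun s => setIntegral_le_integral hint (ae_of_all _ h0)
  have hsetnn : ∀ s : Set ℝ, 0 ≤ ∫ v in s, f v := fun s => integral_nonneg h0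
  have hint1 : IntegrableOn (fun u => f u * HTG f a) (Ioc a b) :=
    (hint.integrableOn).mul_const _
  have hint2 : IntegrableOn (fun u => f u * ∫ v in Ioc a u, f v) (Ioc a b) := by
    refine HTbddIntOn (hm.mul hmono.measurable) (C := C * ∫ v, f v) (fun u _ => ?_)
      measurableSet_Ioc measure_Ioc_lt_top
    rw [abs_of_nonneg (mul_nonneg (h0 _) (hsetnn _))]
    exact mul_le_mul (hC _) (hsetle _) (hsetnn _) hC0
  rw [integral_add hint1 hint2, integral_mul_const, hsub,
    HTsym hm h0 hC hint hab, hsub]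
  ring

lemma HTPi_nonneg {f : ℝ → ℝ} (h0 : ∀ u, 0 ≤ f u) (hint : Integrable f)
    (h1 : HTG f 1 = 1) {a b : ℝ} (ha : a ∈ Icc (0:ℝ) 1) (hb : b ∈ Icc (0:ℝ) 1) :
    0 ≤ HTPi f a b := by
  have hmono := HTG_mono h0 hint
  unfold HTPi; split_ifs with h
  · linarith [hmono h]
  · have h2 : HTG f a ≤ 1 := h1 ▸ hmono ha.2
    have h3 : 0 ≤ HTG f b := HTG_nonneg h0 b
    linarith

lemma HTPi_le_one {f : ℝ → ℝ} (h0 : ∀ u, 0 ≤ f u) (hint : Integrable f)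
    (h1 : HTG f 1 = 1) {a b : ℝ} (ha : a ∈ Icc (0:ℝ) 1) (hb : b ∈ Icc (0:ℝ) 1) :
    HTPi f a b ≤ 1 := by
  have hmono := HTG_mono h0 hint
  unfold HTPi; split_ifs with h
  · have h2 : HTG f b ≤ 1 := h1 ▸ hmono hb.2
    have h3 : 0 ≤ HTG f a := HTG_nonneg h0 a
    linarith
  · push_neg at h
    linarith [hmono h.le]

lemma HTarc_f {f : ℝ → ℝ} (hint : Integrable f) (h1 : HTG f 1 = 1)
    {a b : ℝ} (ha : a ∈ Icc (0:ℝ) 1) (hb : b ∈ Icc (0:ℝ) 1) :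
    ∫ u in HTArc a b, f u = HTPi f a b := by
  unfold HTArc HTPi; split_ifs with h
  · rw [HTG_add hint ha.1 h]; ring
  · push_neg at h
    have hdisj : Disjoint (Ioc a (1:ℝ)) (Ioc (0:ℝ) b) := by
      rw [Set.disjoint_left]
      intro u hu1 hu2
      exact absurd (lt_trans h (hu1.1)) (not_lt.2 hu2.2)
    rw [setIntegral_union hdisj measurableSet_Ioc hint.integrableOn hint.integrableOn]
    have e1 : ∫ u in Ioc a 1, f u = 1 - HTG f a := by
      have := HTG_add hint ha.1 ha.2
      rw [h1] at this; linarith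
    have e2 : ∫ u in Ioc (0:ℝ) b, f u = HTG f b := rfl
    rw [e1, e2]

lemma HTkey {f : ℝ → ℝ} (hm : Measurable f) (h0 : ∀ u, 0 ≤ f u)
    (hint : Integrable f) {C : ℝ} (hC : ∀ u, f u ≤ C) (h1 : HTG f 1 = 1)
    {x y : ℝ} (hx : x ∈ Icc (0:ℝ) 1) (hy : y ∈ Icc (0:ℝ) 1) :
    ∫ u in HTArc x y, f u * (HTPi f x u + HTPi f y u) = HTPi f x y := by
  have hC0 : 0 ≤ C := le_trans (h0 0) (hC 0)
  have hGle : ∀ u, HTG f u ≤ ∫ v, f v :=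
    fun u => setIntegral_le_integral hint (ae_of_all _ h0)
  have hGnn := HTG_nonneg h0
  have hfG_int : ∀ s : Set ℝ, MeasurableSet s → volume s < ⊤ →
      IntegrableOn (fun u => f u * HTG f u) s := by
    intro s hs hfin
    refine HTbddIntOn (hm.mul (HTG_meas h0 hint)) (C := C * ∫ v, f v)
      (fun u _ => ?_) hs hfin
    rw [abs_of_nonneg (mul_nonneg (h0 _) (hGnn _))]
    exact mul_le_mul (hC _) (hGle _) (hGnn _) hC0
  have hne_ae : ∀ (s : Set ℝ) (c : ℝ), ∀ᵐ u : ℝ ∂(volume.restrict s), u ≠ c := by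
    intro s c
    have h1 : ∀ᵐ u : ℝ, u ≠ c := by
      rw [ae_iff]; simpa using measure_singleton (α := ℝ) c
    exact h1.filter_mono (ae_mono Measure.restrict_le_self)
  -- split on wrap
  by_cases hxy : x ≤ y
  · have hArc : HTArc x y = Ioc x y := if_pos hxy
    rw [hArc]
    have hae : (fun u => f u * (HTPi f x u + HTPi f y u)) =ᵐ[volume.restrict (Ioc x y)]
        (fun u => 2 * (f u * HTG f u) + (1 - HTG f x - HTG f y) * f u) := by
      refine (ae_restrict_mem measurableSet_Ioc).mp ((hne_ae _ y).mono ?_)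
      intro u hne hu
      have e1 : HTPi f x u = HTG f u - HTG f x := if_pos hu.1.le
      have e2 : HTPi f y u = 1 - HTG f y + HTG f u :=
        if_neg (not_le.2 (lt_of_le_of_ne hu.2 hne))
      show f u * (HTPi f x u + HTPi f y u)
        = 2 * (f u * HTG f u) + (1 - HTG f x - HTG f y) * f u
      rw [e1, e2]; ring
    rw [integral_congr_ae hae, integral_add ((hfG_int _ measurableSet_Ioc
        measure_Ioc_lt_top).const_mul 2) (hint.integrableOn.const_mul _),
      integral_const_mul, integral_const_mul,
      HTJ hm h0 hint hC hx.1 hxy]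
    have hsub : ∫ u in Ioc x y, f u = HTG f y - HTG f x := by
      rw [HTG_add hint hx.1 hxy]; ring
    rw [hsub, HTPi, if_pos hxy]; ring
  · push_neg at hxy
    have hArc : HTArc x y = Ioc x 1 ∪ Ioc 0 y := if_neg (not_le.2 hxy)
    have hdisj : Disjoint (Ioc x (1:ℝ)) (Ioc (0:ℝ) y) := by
      rw [Set.disjoint_left]
      intro u hu1 hu2
      exact absurd (lt_trans hxy (hu1.1)) (not_lt.2 hu2.2)
    have hintg : ∀ s : Set ℝ, MeasurableSet s → volume s < ⊤ →
        IntegrableOn (fun u => f u * (HTPi f x u + HTPi f y u)) s := by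
      intro s hs hfin
      refine HTbddIntOn (hm.mul ((HTPi_meas h0 hint x).add (HTPi_meas h0 hint y)))
        (C := C * (2 * (1 + ∫ v, f v))) (fun u _ => ?_) hs hfin
      have hPb : ∀ a, |HTPi f a u| ≤ 1 + ∫ v, f v := by
        intro a
        have hT0 : 0 ≤ ∫ v, f v := integral_nonneg h0
        unfold HTPi; split_ifs with h
        · rw [abs_le]
          refine ⟨by linarith [hGnn u, hGle a], by linarith [hGnn a, hGle u]⟩
        · rw [abs_le]
          refine ⟨by linarith [hGnn u, hGle a], by linarith [hGle a, hGnn a, hGnn u, hGle u]⟩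
      rw [abs_mul]
      have hfu : |f u| ≤ C := by rw [abs_of_nonneg (h0 u)]; exact hC u
      have hsum : |HTPi f x u + HTPi f y u| ≤ 2 * (1 + ∫ v, f v) := by
        have := abs_add_le (HTPi f x u) (HTPi f y u)
        have h2 := hPb x
        have h3 := hPb y
        linarith
      exact mul_le_mul hfu hsum (abs_nonneg _) hC0
    rw [hArc, setIntegral_union hdisj measurableSet_Ioc
      (hintg _ measurableSet_Ioc measure_Ioc_lt_top)
      (hintg _ measurableSet_Ioc measure_Ioc_lt_top)]
    -- part 1 : over Ioc x 1
    have p1 : ∫ u in Ioc x 1, f u * (HTPi f x u + HTPi f y u)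
        = (1 - HTG f x ^ 2) - (HTG f x + HTG f y) * (1 - HTG f x) := by
      have e : ∀ u ∈ Ioc x (1:ℝ), f u * (HTPi f x u + HTPi f y u)
          = 2 * (f u * HTG f u) + (-(HTG f x) - HTG f y) * f u := by
        intro u hu
        have e1 : HTPi f x u = HTG f u - HTG f x := if_pos hu.1.le
        have e2 : HTPi f y u = HTG f u - HTG f y := if_pos (le_trans hxy.le hu.1.le)
        rw [e1, e2]; ring
      rw [setIntegral_congr_fun measurableSet_Ioc e,
        integral_add ((hfG_int _ measurableSet_Ioc measure_Ioc_lt_top).const_mul 2)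
          (hint.integrableOn.const_mul _),
        integral_const_mul, integral_const_mul, HTJ hm h0 hint hC hx.1 hx.2]
      have hsub : ∫ u in Ioc x 1, f u = 1 - HTG f x := by
        have := HTG_add hint hx.1 hx.2
        rw [h1] at this; linarith
      rw [hsub, h1]; ring
    -- part 2 : over Ioc 0 y
    have p2 : ∫ u in Ioc 0 y, f u * (HTPi f x u + HTPi f y u)
        = HTG f y ^ 2 + (2 - HTG f x - HTG f y) * HTG f y := by
      have hae : (fun u => f u * (HTPi f x u + HTPi f y u)) =ᵐ[volume.restrict (Ioc (0:ℝ) y)]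
          (fun u => 2 * (f u * HTG f u) + (2 - HTG f x - HTG f y) * f u) := by
        refine (ae_restrict_mem measurableSet_Ioc).mp ((hne_ae _ y).mono ?_)
        intro u hne hu
        have e1 : HTPi f x u = 1 - HTG f x + HTG f u :=
          if_neg (not_le.2 (lt_of_le_of_lt hu.2 hxy))
        have e2 : HTPi f y u = 1 - HTG f y + HTG f u :=
          if_neg (not_le.2 (lt_of_le_of_ne hu.2 hne))
        show f u * (HTPi f x u + HTPi f y u)
          = 2 * (f u * HTG f u) + (2 - HTG f x - HTG f y) * f u
        rw [e1, e2]; ring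
      rw [integral_congr_ae hae, integral_add ((hfG_int _ measurableSet_Ioc
          measure_Ioc_lt_top).const_mul 2) (hint.integrableOn.const_mul _),
        integral_const_mul, integral_const_mul, HTJ hm h0 hint hC le_rfl hy.1]
      have e3 : ∫ u in Ioc (0:ℝ) y, f u = HTG f y := rfl
      rw [e3, HTG_zero]; ring
    rw [p1, p2, HTPi, if_neg (not_le.2 hxy)]
    ring

lemma HTcint_arc {h : ℝ → ℝ} (hint : IntegrableOn h (Set.Ioc (0:ℝ) 1))
    {x y : ℝ} (hx : x ∈ Icc (0:ℝ) 1) (hy : y ∈ Icc (0:ℝ) 1) :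
    cint x y h = ∫ u in HTArc x y, h u := by
  unfold cint HTArc; split_ifs with hxy
  · exact intervalIntegral.integral_of_le hxy
  · have hdisj : Disjoint (Ioc x (1:ℝ)) (Ioc (0:ℝ) y) := by
      push_neg at hxy
      rw [Set.disjoint_left]
      intro u hu1 hu2
      exact absurd (lt_trans hxy hu1.1) (not_lt.2 hu2.2)
    rw [intervalIntegral.integral_of_le hx.2, intervalIntegral.integral_of_le hy.1,
      setIntegral_union hdisj measurableSet_Ioc
        (hint.mono_set (Ioc_subset_Ioc_left hx.1))
        (hint.mono_set (Ioc_subset_Ioc_right hy.2))]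


set_option maxHeartbeats 1000000 in
/-- Heavy-traffic limit of the batch-correlation part: if for each load
`ρ ∈ (0,1)` the bounded measurable function `g_ρ` solves
`g_ρ(x,y) = ρπ(y)·∫*_{u=x}^{y} [g_ρ(x,u)+g_ρ(y,u)] du
  + ρκπ(y)·∫*_{u=x}^{y} [ρπ(u)+1−ρ] du`,
then `(1−ρ)·g_ρ(x,y) → κ·π(y)·∫*_{u=x}^{y} π(u) du` as `ρ → 1⁻`. -/
theorem heavy_traffic_limit_of_gK
    (π : ℝ → ℝ) (hπmeas : Measurable π)
    (hπnn : ∀ x ∈ Set.Icc (0 : ℝ) 1, 0 ≤ π x)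
    (hπbd : ∃ M : ℝ, ∀ x ∈ Set.Icc (0 : ℝ) 1, π x ≤ M)
    (hπint : (∫ u in (0 : ℝ)..1, π u) = 1)
    (κ : ℝ) (hκ : 0 ≤ κ)
    (g : ℝ → ℝ → ℝ → ℝ)
    (hgmeas : ∀ ρ ∈ Set.Ioo (0 : ℝ) 1, Measurable (Function.uncurry (g ρ)))
    (hgbd : ∀ ρ ∈ Set.Ioo (0 : ℝ) 1,
      ∃ M : ℝ, ∀ x ∈ Set.Icc (0 : ℝ) 1, ∀ y ∈ Set.Icc (0 : ℝ) 1, |g ρ x y| ≤ M)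
    (heq : ∀ ρ ∈ Set.Ioo (0 : ℝ) 1, ∀ x ∈ Set.Icc (0 : ℝ) 1, ∀ y ∈ Set.Icc (0 : ℝ) 1,
      g ρ x y = ρ * π y * cint x y (fun u => g ρ x u + g ρ y u)
        + ρ * κ * π y * cint x y (fun u => ρ * π u + (1 - ρ))) :
    ∀ x ∈ Set.Icc (0 : ℝ) 1, ∀ y ∈ Set.Icc (0 : ℝ) 1,
      Filter.Tendsto (fun ρ => (1 - ρ) * g ρ x y)
        (nhdsWithin 1 (Set.Ioo (0 : ℝ) 1)) (nhds (κ * π y * cint x y π)) := by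
  intro x hx y hy
  obtain ⟨M, hM⟩ := hπbd
  set Mp : ℝ := max M 0 with hMpdef
  have hMp0 : 0 ≤ Mp := le_max_right M 0
  set pt : ℝ → ℝ := (Set.Icc (0:ℝ) 1).indicator π with hptdef
  have hpeq : ∀ u ∈ Icc (0:ℝ) 1, pt u = π u := fun u hu => Set.indicator_of_mem hu π
  have hpm : Measurable pt := hπmeas.indicator measurableSet_Icc
  have hp0 : ∀ u, 0 ≤ pt u := by
    intro u
    rw [hptdef, Set.indicator_apply]
    split_ifs with h
    · exact hπnn u h
    · exact le_rfl
  have hpC : ∀ u, pt u ≤ Mp := by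
    intro u
    rw [hptdef, Set.indicator_apply]
    split_ifs with h
    · exact le_trans (hM u h) (le_max_left M 0)
    · exact hMp0
  have hπIntOn : IntegrableOn π (Ioc (0:ℝ) 1) := by
    refine HTbddIntOn hπmeas (C := Mp) (fun u hu => ?_) measurableSet_Ioc measure_Ioc_lt_top
    have hu' : u ∈ Icc (0:ℝ) 1 := ⟨hu.1.le, hu.2⟩
    rw [abs_of_nonneg (hπnn u hu')]
    exact le_trans (hM u hu') (le_max_left M 0)
  have hpint : Integrable pt := by
    have h1 : IntegrableOn π (Icc (0:ℝ) 1) := by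
      refine HTbddIntOn hπmeas (C := Mp) (fun u hu => ?_) measurableSet_Icc
        measure_Icc_lt_top
      rw [abs_of_nonneg (hπnn u hu)]
      exact le_trans (hM u hu) (le_max_left M 0)
    exact h1.integrable_indicator measurableSet_Icc
  have h1 : HTG pt 1 = 1 := by
    have e : ∀ u ∈ Ioc (0:ℝ) 1, pt u = π u := fun u hu => hpeq u ⟨hu.1.le, hu.2⟩
    have : HTG pt 1 = ∫ u in Ioc (0:ℝ) 1, π u := setIntegral_congr_fun measurableSet_Ioc e
    rw [this, ← intervalIntegral.integral_of_le (by norm_num : (0:ℝ) ≤ 1), hπint]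
  have harc_pt : ∀ a ∈ Icc (0:ℝ) 1, ∀ b ∈ Icc (0:ℝ) 1,
      ∫ u in HTArc a b, pt u = HTPi pt a b := fun a ha b hb => HTarc_f hpint h1 ha hb
  have hptIntOn : IntegrableOn pt (Ioc (0:ℝ) 1) := hpint.integrableOn
  have hPnn : ∀ a ∈ Icc (0:ℝ) 1, ∀ b ∈ Icc (0:ℝ) 1, 0 ≤ HTPi pt a b :=
    fun a ha b hb => HTPi_nonneg hp0 hpint h1 ha hb
  have hPle : ∀ a ∈ Icc (0:ℝ) 1, ∀ b ∈ Icc (0:ℝ) 1, HTPi pt a b ≤ 1 :=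
    fun a ha b hb => HTPi_le_one hp0 hpint h1 ha hb
  have hIoc_Icc : Ioc (0:ℝ) 1 ⊆ Icc (0:ℝ) 1 := Ioc_subset_Icc_self
  -- rewrite the target
  have hcintπ : cint x y π = HTPi pt x y := by
    rw [HTcint_arc hπIntOn hx hy,
      setIntegral_congr_fun (HTArc_meas x y)
        (fun u hu => ((hpeq u (hIoc_Icc (HTArc_subset hx hy hu)))).symm),
      harc_pt x hx y hy]
  rw [hcintπ]
  -- quantitative estimate
  have main : ∀ ρ ∈ Set.Ioo (0:ℝ) 1,
      |(1-ρ) * g ρ x y - κ * π y * HTPi pt x y| ≤ 9 * κ * Mp * (1-ρ) := by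
    rintro ρ ⟨hρ0, hρ1⟩
    have h1ρ : 0 < 1 - ρ := by linarith
    obtain ⟨Mg, hMgr⟩ := hgbd ρ ⟨hρ0, hρ1⟩
    set Mgp : ℝ := max Mg 0 with hMgpdef
    have hMgp0 : 0 ≤ Mgp := le_max_right Mg 0
    have hMg : ∀ a ∈ Icc (0:ℝ) 1, ∀ b ∈ Icc (0:ℝ) 1, |g ρ a b| ≤ Mgp :=
      fun a ha b hb => le_trans (hMgr a ha b hb) (le_max_left Mg 0)
    set D : ℝ → ℝ → ℝ := fun a b => (1-ρ) * g ρ a b - κ * pt b * HTPi pt a b with hDdef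
    set c0 : ℝ := 3 * κ * (1-ρ)^2 with hc0def
    have hc0nn : 0 ≤ c0 := by positivity
    set d : ℝ := (1-ρ) * Mgp + κ * Mp with hddef
    have hdnn : 0 ≤ d := by positivity
    have hgmeas' : ∀ a : ℝ, Measurable (fun u => g ρ a u) := by
      intro a
      have h2 : (fun u => g ρ a u) = Function.uncurry (g ρ) ∘ (fun u => (a, u)) := rfl
      rw [h2]
      exact (hgmeas ρ ⟨hρ0, hρ1⟩).comp (measurable_const.prodMk measurable_id)
    have hDmeas : ∀ a : ℝ, Measurable (fun u => D a u) := by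
      intro a
      exact (measurable_const.mul (hgmeas' a)).sub
        ((measurable_const.mul hpm).mul (HTPi_meas hp0 hpint a))
    have hDbd : ∀ a ∈ Icc (0:ℝ) 1, ∀ u ∈ Icc (0:ℝ) 1, |D a u| ≤ d := by
      intro a ha u hu
      rw [hDdef]
      have h2 : |(1-ρ) * g ρ a u| ≤ (1-ρ) * Mgp := by
        rw [abs_mul, abs_of_nonneg h1ρ.le]
        exact mul_le_mul_of_nonneg_left (hMg a ha u hu) h1ρ.le
      have h3 : |κ * pt u * HTPi pt a u| ≤ κ * Mp := by
        rw [abs_of_nonneg (mul_nonneg (mul_nonneg hκ (hp0 u)) (hPnn a ha u hu))]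
        calc κ * pt u * HTPi pt a u ≤ κ * pt u * 1 :=
              mul_le_mul_of_nonneg_left (hPle a ha u hu) (mul_nonneg hκ (hp0 u))
          _ = κ * pt u := by ring
          _ ≤ κ * Mp := mul_le_mul_of_nonneg_left (hpC u) hκ
      calc |(1-ρ) * g ρ a u - κ * pt u * HTPi pt a u|
          ≤ |(1-ρ) * g ρ a u| + |κ * pt u * HTPi pt a u| := abs_sub _ _
        _ ≤ (1-ρ) * Mgp + κ * Mp := add_le_add h2 h3
    have hDint : ∀ a ∈ Icc (0:ℝ) 1, IntegrableOn (fun u => D a u) (Ioc (0:ℝ) 1) := by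
      intro a ha
      exact HTbddIntOn (hDmeas a) (C := d)
        (fun u hu => hDbd a ha u (hIoc_Icc hu)) measurableSet_Ioc measure_Ioc_lt_top
    -- the fixed point identity for D
    have hDrec : ∀ a ∈ Icc (0:ℝ) 1, ∀ b ∈ Icc (0:ℝ) 1,
        D a b = ρ * pt b * (∫ u in HTArc a b, (D a u + D b u))
          + κ * pt b * ((1-ρ) * ((ρ^2-1) * HTPi pt a b
              + ρ * (1-ρ) * ∫ u in HTArc a b, (1:ℝ))) := by
      intro a ha b hb
      have hgab := heq ρ ⟨hρ0, hρ1⟩ a ha b hb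
      have hArcSub := HTArc_subset ha hb
      have hArcIcc : ∀ u ∈ HTArc a b, u ∈ Icc (0:ℝ) 1 := fun u hu => hIoc_Icc (hArcSub hu)
      have hc1int : IntegrableOn (fun u => g ρ a u + g ρ b u) (Ioc (0:ℝ) 1) := by
        refine HTbddIntOn ((hgmeas' a).add (hgmeas' b)) (C := Mgp + Mgp)
          (fun u hu => ?_) measurableSet_Ioc measure_Ioc_lt_top
        exact le_trans (abs_add_le _ _)
          (add_le_add (hMg a ha u (hIoc_Icc hu)) (hMg b hb u (hIoc_Icc hu)))
      have e1 : cint a b (fun u => g ρ a u + g ρ b u)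
          = ∫ u in HTArc a b, (g ρ a u + g ρ b u) := HTcint_arc hc1int ha hb
      have hw_int : IntegrableOn (fun u => ρ * π u + (1-ρ)) (Ioc (0:ℝ) 1) :=
        (hπIntOn.const_mul ρ).add (integrableOn_const measure_Ioc_lt_top.ne)
      have e2 : cint a b (fun u => ρ * π u + (1-ρ))
          = ρ * HTPi pt a b + (1-ρ) * ∫ u in HTArc a b, (1:ℝ) := by
        rw [HTcint_arc hw_int ha hb]
        have e2a : ∀ u ∈ HTArc a b, ρ * π u + (1-ρ) = ρ * pt u + (1-ρ) * 1 := by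
          intro u hu
          rw [hpeq u (hArcIcc u hu)]; ring
        rw [setIntegral_congr_fun (HTArc_meas a b) e2a,
          integral_add ((hptIntOn.mono_set hArcSub).const_mul ρ)
            ((integrableOn_const (C := (1:ℝ)) (lt_of_le_of_lt (measure_mono hArcSub)
              measure_Ioc_lt_top).ne).const_mul (1-ρ)),
          integral_const_mul, integral_const_mul, harc_pt a ha b hb]
      have hPiu_int : IntegrableOn
          (fun u => κ * (pt u * (HTPi pt a u + HTPi pt b u))) (Ioc (0:ℝ) 1) := by
        refine HTbddIntOn (measurable_const.mul (hpm.mul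
          ((HTPi_meas hp0 hpint a).add (HTPi_meas hp0 hpint b)))) (C := κ * (Mp * 2))
          (fun u hu => ?_) measurableSet_Ioc measure_Ioc_lt_top
        have hu' := hIoc_Icc hu
        have h2 : 0 ≤ pt u * (HTPi pt a u + HTPi pt b u) :=
          mul_nonneg (hp0 u) (add_nonneg (hPnn a ha u hu') (hPnn b hb u hu'))
        rw [abs_of_nonneg (mul_nonneg hκ h2)]
        refine mul_le_mul_of_nonneg_left ?_ hκ
        calc pt u * (HTPi pt a u + HTPi pt b u) ≤ Mp * (HTPi pt a u + HTPi pt b u) :=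
              mul_le_mul_of_nonneg_right (hpC u)
                (add_nonneg (hPnn a ha u hu') (hPnn b hb u hu'))
          _ ≤ Mp * 2 := mul_le_mul_of_nonneg_left
              (by linarith [hPle a ha u hu', hPle b hb u hu']) hMp0
      have e3 : (1-ρ) * ∫ u in HTArc a b, (g ρ a u + g ρ b u)
          = (∫ u in HTArc a b, (D a u + D b u)) + κ * HTPi pt a b := by
        rw [← integral_const_mul]
        have e3a : ∀ u ∈ HTArc a b, (1-ρ) * (g ρ a u + g ρ b u)
            = (D a u + D b u) + κ * (pt u * (HTPi pt a u + HTPi pt b u)) := by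
          intro u hu
          rw [hDdef]; ring
        have hDDint : IntegrableOn (fun u => D a u + D b u) (Ioc (0:ℝ) 1) :=
          (hDint a ha).add (hDint b hb)
        rw [setIntegral_congr_fun (HTArc_meas a b) e3a,
          integral_add (hDDint.mono_set hArcSub) (hPiu_int.mono_set hArcSub),
          integral_const_mul, HTkey hpm hp0 hpint hpC h1 ha hb]
      have e13 : (1-ρ) * cint a b (fun u => g ρ a u + g ρ b u)
          = (∫ u in HTArc a b, (D a u + D b u)) + κ * HTPi pt a b := by
        rw [e1]; exact e3
      have hπb : π b = pt b := (hpeq b hb).symm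
      rw [hDdef]
      show (1-ρ) * g ρ a b - κ * pt b * HTPi pt a b = _
      rw [hgab, hπb]
      linear_combination (ρ * pt b) * e13 + ((1-ρ) * ρ * κ * pt b) * e2
    -- basic bounds on the arc length integral
    have hLab : ∀ a ∈ Icc (0:ℝ) 1, ∀ b ∈ Icc (0:ℝ) 1,
        0 ≤ (∫ u in HTArc a b, (1:ℝ)) ∧ (∫ u in HTArc a b, (1:ℝ)) ≤ 1 := by
      intro a ha b hb
      constructor
      · exact integral_nonneg (fun u => zero_le_one)
      · have h2 : (∫ u in HTArc a b, (1:ℝ)) ≤ ∫ u in Ioc (0:ℝ) 1, (1:ℝ) := by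
          refine setIntegral_mono_set
            (integrableOn_const measure_Ioc_lt_top.ne)
            (ae_of_all _ fun u => zero_le_one)
            (HasSubset.Subset.eventuallyLE (HTArc_subset ha hb))
        calc (∫ u in HTArc a b, (1:ℝ)) ≤ ∫ u in Ioc (0:ℝ) 1, (1:ℝ) := h2
          _ = 1 := by simp
    -- one-step inequality
    have hDabs : ∀ a ∈ Icc (0:ℝ) 1, ∀ b ∈ Icc (0:ℝ) 1,
        |D a b| ≤ ρ * pt b * |∫ u in HTArc a b, (D a u + D b u)| + pt b * c0 := by
      intro a ha b hb
      rw [hDrec a ha b hb]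
      have h2 : |ρ * pt b * (∫ u in HTArc a b, (D a u + D b u))|
          = ρ * pt b * |∫ u in HTArc a b, (D a u + D b u)| := by
        rw [abs_mul, abs_of_nonneg (mul_nonneg hρ0.le (hp0 b))]
      have h3 : |κ * pt b * ((1-ρ) * ((ρ^2-1) * HTPi pt a b
          + ρ * (1-ρ) * ∫ u in HTArc a b, (1:ℝ)))| ≤ pt b * c0 := by
        obtain ⟨hL0, hL1⟩ := hLab a ha b hb
        have hP0 := hPnn a ha b hb
        have hP1 := hPle a ha b hb
        have h4 : |(ρ^2-1) * HTPi pt a b + ρ * (1-ρ) * ∫ u in HTArc a b, (1:ℝ)|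
            ≤ 3 * (1-ρ) := by
          rw [abs_le]
          constructor <;> nlinarith
        calc |κ * pt b * ((1-ρ) * ((ρ^2-1) * HTPi pt a b
              + ρ * (1-ρ) * ∫ u in HTArc a b, (1:ℝ)))|
            = κ * pt b * ((1-ρ) * |(ρ^2-1) * HTPi pt a b
              + ρ * (1-ρ) * ∫ u in HTArc a b, (1:ℝ)|) := by
              rw [abs_mul, abs_mul, abs_mul, abs_of_nonneg hκ, abs_of_nonneg (hp0 b),
                abs_of_nonneg h1ρ.le]
          _ ≤ κ * pt b * ((1-ρ) * (3 * (1-ρ))) := by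
              refine mul_le_mul_of_nonneg_left ?_ (mul_nonneg hκ (hp0 b))
              exact mul_le_mul_of_nonneg_left h4 h1ρ.le
          _ = pt b * c0 := by rw [hc0def]; ring
      calc |ρ * pt b * (∫ u in HTArc a b, (D a u + D b u))
            + κ * pt b * ((1-ρ) * ((ρ^2-1) * HTPi pt a b
              + ρ * (1-ρ) * ∫ u in HTArc a b, (1:ℝ)))|
          ≤ |ρ * pt b * (∫ u in HTArc a b, (D a u + D b u))|
            + |κ * pt b * ((1-ρ) * ((ρ^2-1) * HTPi pt a b
              + ρ * (1-ρ) * ∫ u in HTArc a b, (1:ℝ)))| := abs_add_le _ _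
        _ ≤ ρ * pt b * |∫ u in HTArc a b, (D a u + D b u)| + pt b * c0 := by
            rw [h2]; exact add_le_add le_rfl h3
    -- abstract invariant propagation
    have hstep : ∀ α β : ℝ, 0 ≤ α → 0 ≤ β →
        (∀ a ∈ Icc (0:ℝ) 1, ∀ b ∈ Icc (0:ℝ) 1,
          |D a b| ≤ pt b * (α * HTPi pt a b + β)) →
        ∀ a ∈ Icc (0:ℝ) 1, ∀ b ∈ Icc (0:ℝ) 1,
          |D a b| ≤ pt b * (ρ * (α + 2*β) * HTPi pt a b + c0) := by
      intro α β hα hβ hInv a ha b hb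
      have hArcSub := HTArc_subset ha hb
      have hArcIcc : ∀ u ∈ HTArc a b, u ∈ Icc (0:ℝ) 1 := fun u hu => hIoc_Icc (hArcSub hu)
      have hDD1 : IntegrableOn (fun u => D a u + D b u) (Ioc (0:ℝ) 1) :=
        (hDint a ha).add (hDint b hb)
      have hDDint : IntegrableOn (fun u => D a u + D b u) (HTArc a b) :=
        hDD1.mono_set hArcSub
      have hRHSint : IntegrableOn
          (fun u => pt u * (α * HTPi pt a u + β) + pt u * (α * HTPi pt b u + β))
          (Ioc (0:ℝ) 1) := by
        refine HTbddIntOn ((hpm.mul ((measurable_const.mul (HTPi_meas hp0 hpint a)).add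
          measurable_const)).add (hpm.mul ((measurable_const.mul
          (HTPi_meas hp0 hpint b)).add measurable_const)))
          (C := 2 * (Mp * (α + β))) (fun u hu => ?_) measurableSet_Ioc measure_Ioc_lt_top
        have hu' := hIoc_Icc hu
        have hb1 : ∀ c ∈ Icc (0:ℝ) 1, 0 ≤ pt u * (α * HTPi pt c u + β) ∧
            pt u * (α * HTPi pt c u + β) ≤ Mp * (α + β) := by
          intro c hc
          constructor
          · exact mul_nonneg (hp0 u) (add_nonneg (mul_nonneg hα (hPnn c hc u hu')) hβ)
          · calc pt u * (α * HTPi pt c u + β) ≤ Mp * (α * HTPi pt c u + β) :=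
                mul_le_mul_of_nonneg_right (hpC u)
                  (add_nonneg (mul_nonneg hα (hPnn c hc u hu')) hβ)
            _ ≤ Mp * (α + β) := by
                refine mul_le_mul_of_nonneg_left ?_ hMp0
                have := hPle c hc u hu'
                nlinarith [hPnn c hc u hu']
        obtain ⟨ha0, ha1⟩ := hb1 a ha
        obtain ⟨hb0, hb1'⟩ := hb1 b hb
        rw [abs_of_nonneg (add_nonneg ha0 hb0)]
        linarith
      have hS : |∫ u in HTArc a b, (D a u + D b u)| ≤ (α + 2*β) * HTPi pt a b := by
        have habs : |∫ u in HTArc a b, (D a u + D b u)|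
            ≤ ∫ u in HTArc a b, |D a u + D b u| := by
          simpa [Real.norm_eq_abs] using
            norm_integral_le_integral_norm (μ := volume.restrict (HTArc a b))
              (fun u => D a u + D b u)
        have hmono : (∫ u in HTArc a b, |D a u + D b u|)
            ≤ ∫ u in HTArc a b, (pt u * (α * HTPi pt a u + β)
                + pt u * (α * HTPi pt b u + β)) := by
          refine setIntegral_mono_on hDDint.abs (hRHSint.mono_set hArcSub)
            (HTArc_meas a b) (fun u hu => ?_)
          have hu' := hArcIcc u hu
          exact le_trans (abs_add_le _ _)
            (add_le_add (hInv a ha u hu') (hInv b hb u hu'))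
        have hval : (∫ u in HTArc a b, (pt u * (α * HTPi pt a u + β)
            + pt u * (α * HTPi pt b u + β)))
            = (α + 2*β) * HTPi pt a b := by
          have e : ∀ u ∈ HTArc a b, pt u * (α * HTPi pt a u + β)
              + pt u * (α * HTPi pt b u + β)
              = α * (pt u * (HTPi pt a u + HTPi pt b u)) + (2*β) * pt u := by
            intro u hu; ring
          have hint1 : IntegrableOn
              (fun u => α * (pt u * (HTPi pt a u + HTPi pt b u))) (HTArc a b) := by
            refine (HTbddIntOn (hpm.mul ((HTPi_meas hp0 hpint a).add
              (HTPi_meas hp0 hpint b))) (C := Mp * 2) (fun u hu => ?_)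
              measurableSet_Ioc measure_Ioc_lt_top).mono_set hArcSub |>.const_mul α
            have hu' := hIoc_Icc hu
            have h2 : 0 ≤ pt u * (HTPi pt a u + HTPi pt b u) :=
              mul_nonneg (hp0 u) (add_nonneg (hPnn a ha u hu') (hPnn b hb u hu'))
            show |pt u * (HTPi pt a u + HTPi pt b u)| ≤ Mp * 2
            rw [abs_of_nonneg h2]
            calc pt u * (HTPi pt a u + HTPi pt b u)
                ≤ Mp * (HTPi pt a u + HTPi pt b u) := mul_le_mul_of_nonneg_right (hpC u)
                  (add_nonneg (hPnn a ha u hu') (hPnn b hb u hu'))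
              _ ≤ Mp * 2 := mul_le_mul_of_nonneg_left
                  (by linarith [hPle a ha u hu', hPle b hb u hu']) hMp0
          have hint2 : IntegrableOn (fun u => (2*β) * pt u) (HTArc a b) :=
            ((hptIntOn.mono_set hArcSub).const_mul (2*β))
          rw [setIntegral_congr_fun (HTArc_meas a b) e, integral_add hint1 hint2,
            integral_const_mul, integral_const_mul,
            HTkey hpm hp0 hpint hpC h1 ha hb, harc_pt a ha b hb]
          ring
        calc |∫ u in HTArc a b, (D a u + D b u)|
            ≤ ∫ u in HTArc a b, |D a u + D b u| := habs
          _ ≤ _ := hmono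
          _ = (α + 2*β) * HTPi pt a b := hval
      calc |D a b| ≤ ρ * pt b * |∫ u in HTArc a b, (D a u + D b u)| + pt b * c0 :=
            hDabs a ha b hb
        _ ≤ ρ * pt b * ((α + 2*β) * HTPi pt a b) + pt b * c0 := by
            refine add_le_add (mul_le_mul_of_nonneg_left hS
              (mul_nonneg hρ0.le (hp0 b))) le_rfl
        _ = pt b * (ρ * (α + 2*β) * HTPi pt a b + c0) := by ring
    -- base invariant
    have hbase : ∀ a ∈ Icc (0:ℝ) 1, ∀ b ∈ Icc (0:ℝ) 1,
        |D a b| ≤ pt b * (0 * HTPi pt a b + (2*d + c0)) := by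
      intro a ha b hb
      have hArcSub := HTArc_subset ha hb
      have hArcIcc : ∀ u ∈ HTArc a b, u ∈ Icc (0:ℝ) 1 := fun u hu => hIoc_Icc (hArcSub hu)
      have hDD1 : IntegrableOn (fun u => D a u + D b u) (Ioc (0:ℝ) 1) :=
        (hDint a ha).add (hDint b hb)
      have hDDint : IntegrableOn (fun u => D a u + D b u) (HTArc a b) :=
        hDD1.mono_set hArcSub
      have hS : |∫ u in HTArc a b, (D a u + D b u)| ≤ 2*d := by
        have habs : |∫ u in HTArc a b, (D a u + D b u)|
            ≤ ∫ u in HTArc a b, |D a u + D b u| := by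
          simpa [Real.norm_eq_abs] using
            norm_integral_le_integral_norm (μ := volume.restrict (HTArc a b))
              (fun u => D a u + D b u)
        have hmono : (∫ u in HTArc a b, |D a u + D b u|)
            ≤ ∫ u in HTArc a b, (2*d : ℝ) := by
          refine setIntegral_mono_on hDDint.abs
            (integrableOn_const (lt_of_le_of_lt
              (measure_mono hArcSub) measure_Ioc_lt_top).ne)
            (HTArc_meas a b) (fun u hu => ?_)
          have hu' := hArcIcc u hu
          have h2a := hDbd a ha u hu'
          have h2b := hDbd b hb u hu'
          have h2c := abs_add_le (D a u) (D b u)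
          linarith
        have hconst : (∫ u in HTArc a b, (2*d : ℝ)) ≤ 2*d := by
          rw [setIntegral_const, measureReal_def]
          obtain ⟨hL0, hL1⟩ := hLab a ha b hb
          have : (volume (HTArc a b)).toReal ≤ 1 := by
            have e : (∫ u in HTArc a b, (1:ℝ)) = (volume (HTArc a b)).toReal := by
              rw [setIntegral_const, smul_eq_mul, mul_one, measureReal_def]
            rw [← e]; exact hL1
          rw [smul_eq_mul]
          nlinarith [ENNReal.toReal_nonneg (a := volume (HTArc a b))]
        exact le_trans habs (le_trans hmono hconst)
      calc |D a b| ≤ ρ * pt b * |∫ u in HTArc a b, (D a u + D b u)| + pt b * c0 :=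
            hDabs a ha b hb
        _ ≤ ρ * pt b * (2*d) + pt b * c0 := by
            exact add_le_add (mul_le_mul_of_nonneg_left hS
              (mul_nonneg hρ0.le (hp0 b))) le_rfl
        _ ≤ pt b * (0 * HTPi pt a b + (2*d + c0)) := by
            nlinarith [mul_nonneg (hp0 b) hdnn, hρ1, hp0 b, hdnn]
    -- iterate
    set q : ℝ := 2 * c0 / (1-ρ) with hqdef
    have hq0 : 0 ≤ q := div_nonneg (by linarith) h1ρ.le
    have hqrel : (1-ρ) * q = 2 * c0 := by
      rw [hqdef]; field_simp
    set Cb : ℝ := ρ * (0 + 2 * (2*d + c0)) with hCbdef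
    have hCb0 : 0 ≤ Cb := by positivity
    have iter : ∀ n : ℕ, ∃ α : ℝ, 0 ≤ α ∧ α ≤ ρ^n * Cb + q ∧
        (∀ a ∈ Icc (0:ℝ) 1, ∀ b ∈ Icc (0:ℝ) 1,
          |D a b| ≤ pt b * (α * HTPi pt a b + c0)) := by
      intro n
      induction n with
      | zero =>
        refine ⟨ρ * (0 + 2 * (2*d + c0)), by positivity, by simp [hCbdef]; linarith, ?_⟩
        exact hstep 0 (2*d + c0) le_rfl (by linarith) hbase
      | succ n ih =>
        obtain ⟨α, hα0, hαle, hInv⟩ := ih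
        refine ⟨ρ * (α + 2 * c0), by positivity, ?_, hstep α c0 hα0 hc0nn hInv⟩
        have h2 : ρ * (α + 2*c0) ≤ ρ * (ρ^n * Cb + q + 2*c0) := by
          refine mul_le_mul_of_nonneg_left (by linarith) hρ0.le
        have h3 : ρ * (ρ^n * Cb + q + 2*c0) ≤ ρ^(n+1) * Cb + q := by
          have h4 : ρ * q + ρ * (2*c0) ≤ q := by nlinarith [hqrel, hc0nn]
          have h5 : ρ * (ρ^n * Cb) = ρ^(n+1) * Cb := by ring
          nlinarith
        linarith
    -- pass to the limit in n
    have hPxy0 := hPnn x hx y hy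
    have hPxy1 := hPle x hx y hy
    have hfin : ∀ n : ℕ, |D x y| ≤ Mp * Cb * ρ^n + Mp * (q + c0) := by
      intro n
      obtain ⟨α, hα0, hαle, hInv⟩ := iter n
      have h2 := hInv x hx y hy
      have h3 : pt y * (α * HTPi pt x y + c0) ≤ Mp * (α + c0) := by
        have h4 : α * HTPi pt x y + c0 ≤ α + c0 := by nlinarith
        have h5 : 0 ≤ α * HTPi pt x y + c0 := by positivity
        calc pt y * (α * HTPi pt x y + c0) ≤ Mp * (α * HTPi pt x y + c0) :=
              mul_le_mul_of_nonneg_right (hpC y) h5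
          _ ≤ Mp * (α + c0) := mul_le_mul_of_nonneg_left h4 hMp0
      have h6 : Mp * (α + c0) ≤ Mp * Cb * ρ^n + Mp * (q + c0) := by
        have := mul_le_mul_of_nonneg_left hαle hMp0
        nlinarith
      linarith
    have hlim : |D x y| ≤ Mp * (q + c0) := by
      have htend : Filter.Tendsto (fun n : ℕ => Mp * Cb * ρ^n + Mp * (q + c0))
          Filter.atTop (nhds (Mp * (q + c0))) := by
        have h2 : Filter.Tendsto (fun n : ℕ => ρ^n) Filter.atTop (nhds 0) :=
          tendsto_pow_atTop_nhds_zero_of_lt_one hρ0.le hρ1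
        have h3 := (h2.const_mul (Mp * Cb)).add_const (Mp * (q + c0))
        simpa using h3
      exact ge_of_tendsto' htend hfin
    -- final arithmetic
    have hDxy : D x y = (1-ρ) * g ρ x y - κ * π y * HTPi pt x y := by
      show (1-ρ) * g ρ x y - κ * pt y * HTPi pt x y = _
      rw [hpeq y hy]
    have hqval : q = 6 * κ * (1-ρ) := by
      rw [hqdef, hc0def]
      field_simp
      ring
    rw [← hDxy]
    calc |D x y| ≤ Mp * (q + c0) := hlim
      _ ≤ 9 * κ * Mp * (1-ρ) := by
        rw [hqval, hc0def]
        nlinarith [mul_nonneg (mul_nonneg (mul_nonneg hMp0 hκ) h1ρ.le) hρ0.le]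
  -- conclude by squeezing
  have hdist : Filter.Tendsto (fun ρ => |(1-ρ) * g ρ x y - κ * π y * HTPi pt x y|)
      (nhdsWithin 1 (Set.Ioo (0:ℝ) 1)) (nhds 0) := by
    have hub : Filter.Tendsto (fun ρ : ℝ => 9 * κ * Mp * (1-ρ))
        (nhdsWithin 1 (Set.Ioo (0:ℝ) 1)) (nhds 0) := by
      have hcont : Filter.Tendsto (fun ρ : ℝ => 9 * κ * Mp * (1-ρ)) (nhds 1)
          (nhds (9 * κ * Mp * (1-1))) := by
        exact (Continuous.tendsto (by continuity) 1)
      simpa using hcont.mono_left nhdsWithin_le_nhds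
    refine squeeze_zero' ?_ ?_ hub
    · exact Filter.Eventually.of_forall (fun ρ => abs_nonneg _)
    · exact eventually_mem_nhdsWithin.mono (fun ρ hρ => main ρ hρ)
  rw [Metric.tendsto_nhds]
  intro ε hε
  rw [Metric.tendsto_nhds] at hdist
  refine (hdist ε hε).mono (fun ρ hρ => ?_)
  rw [Real.dist_eq] at hρ ⊢
  simpa using hρ
end

section
/- Let ρ > 0, let b > 0, let π be a probability density on [0,1], and let y ∈ [0,1]. Define s : [0,1] → ℝ by s(x) = b·exp( ρ·∫*_{ξ=x}^{y} π(ξ) dξ ). Then for all x ∈ [0,1]: s(x) = b + ρ·∫*_{u=x}^{y} π(u)·s(u) du. -/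
set_option maxHeartbeats 1000000

open MeasureTheory

section Aux

open MeasureTheory Set intervalIntegral
open scoped NNReal ENNReal

lemma cint_core {a b : ℝ} (hab : a ≤ b) (π : ℝ → ℝ) (hmeas : Measurable π)
    (hnn : ∀ x, 0 ≤ π x) (hint : Integrable π volume) (g : ℝ → ℝ) (hg : Continuous g) :
    (∫ u in a..b, π u * g (∫ v in u..b, π v))
      = ∫ v in (0:ℝ)..(∫ v in a..b, π v), g v := by
  set Q : ℝ → ℝ := fun u => ∫ v in u..b, π v with hQ
  have hii : ∀ p q : ℝ, IntervalIntegrable π volume p q := fun p q =>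
    hint.intervalIntegrable
  have hQcont : Continuous Q := by
    have h1 : Continuous fun u => ∫ v in b..u, π v :=
      intervalIntegral.continuous_primitive (fun p q => hii p q) b
    have : Q = fun u => -∫ v in b..u, π v := by
      funext u; exact intervalIntegral.integral_symm b u
    rw [this]; exact h1.neg
  have hQanti : Antitone Q := by
    intro u u' huu'
    have hadd : (∫ v in u..u', π v) + (∫ v in u'..b, π v) = ∫ v in u..b, π v :=
      intervalIntegral.integral_add_adjacent_intervals (hii u u') (hii u' b)
    have hnn' : 0 ≤ ∫ v in u..u', π v :=
      intervalIntegral.integral_nonneg huu' (fun x _ => hnn x)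
    simp only [hQ]; linarith
  have hQb : Q b = 0 := intervalIntegral.integral_same
  have hQnn : ∀ u, u ≤ b → 0 ≤ Q u := fun u hu =>
    intervalIntegral.integral_nonneg hu (fun x _ => hnn x)
  set A : ℝ := Q a with hA
  have hA0 : 0 ≤ A := hQnn a hab
  set μ : Measure ℝ := (volume.restrict (Ioc a b)).withDensity
      (fun u => ENNReal.ofReal (π u)) with hμ
  have hμap : ∀ T : Set ℝ, MeasurableSet T →
      μ T = ∫⁻ u in T ∩ Ioc a b, ENNReal.ofReal (π u) := by
    intro T hT
    rw [hμ, withDensity_apply _ hT, Measure.restrict_restrict hT]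
  have hμIoc : ∀ q, a ≤ q → q ≤ b → μ (Ioc q b) = ENNReal.ofReal (Q q) := by
    intro q hq hqb
    rw [hμap _ measurableSet_Ioc, Set.inter_eq_left.mpr (Set.Ioc_subset_Ioc_left hq)]
    rw [← ofReal_integral_eq_lintegral_ofReal (hint.restrict)
      (Filter.Eventually.of_forall hnn)]
    congr 1
    rw [hQ]
    exact (intervalIntegral.integral_of_le hqb).symm
  have hμuniv : μ Set.univ = ENNReal.ofReal A := by
    rw [hμap _ MeasurableSet.univ, Set.univ_inter,
      ← Set.inter_self (Ioc a b), ← hμap _ measurableSet_Ioc,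
      hμIoc a le_rfl hab]
  haveI : IsFiniteMeasure μ := ⟨by rw [hμuniv]; exact ENNReal.ofReal_lt_top⟩
  haveI : IsFiniteMeasure (μ.map Q) := μ.isFiniteMeasure_map Q
  have hmap : μ.map Q = volume.restrict (Ioc 0 A) := by
    apply Measure.ext_of_Iic
    intro c
    rw [Measure.map_apply hQcont.measurable measurableSet_Iic,
      Measure.restrict_apply measurableSet_Iic]
    have hRHS : Iic c ∩ Ioc 0 A = Ioc 0 (min c A) := by
      ext u; simp only [Set.mem_inter_iff, Set.mem_Iic, Set.mem_Ioc, lt_min_iff, le_min_iff]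
      constructor
      · rintro ⟨h1, h2, h3⟩; exact ⟨h2, h1, h3⟩
      · rintro ⟨h1, h2, h3⟩; exact ⟨h2, h1, h3⟩
    rw [hRHS, Real.volume_Ioc]
    have hS : MeasurableSet (Q ⁻¹' Iic c) := hQcont.measurable measurableSet_Iic
    rcases le_or_gt A c with hc | hc
    · -- c ≥ A : full mass
      have h1 : μ (Q ⁻¹' Iic c) = ENNReal.ofReal A := by
        apply le_antisymm
        · rw [← hμuniv]; exact measure_mono (Set.subset_univ _)
        · rw [← hμIoc a le_rfl hab]
          apply measure_mono
          intro u hu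
          simp only [Set.mem_preimage, Set.mem_Iic]
          calc Q u ≤ Q a := hQanti hu.1.le
          _ ≤ c := hc
      rw [h1, min_eq_right hc, sub_zero]
    rcases lt_or_ge c 0 with hc0 | hc0
    · -- c < 0 : empty
      have h1 : Q ⁻¹' Iic c ∩ Ioc a b = ∅ := by
        ext u
        simp only [Set.mem_inter_iff, Set.mem_preimage, Set.mem_Iic, Set.mem_Ioc,
          Set.mem_empty_iff_false, iff_false]
        rintro ⟨h1, h2, h3⟩
        exact absurd (le_trans (hQnn u h3) h1) (not_le.mpr hc0)
      rw [hμap _ hS, h1]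
      simp [ENNReal.ofReal_eq_zero.mpr (by linarith [min_le_left c A] : min c A - 0 ≤ 0)]
      rw [ENNReal.ofReal_of_nonpos hc0.le]; simp
    · -- 0 ≤ c < A
      have hminc : min c A = c := min_eq_left hc.le
      rw [hminc, sub_zero]
      -- IVT: find q with Q q = c
      obtain ⟨q, hqmem, hQq⟩ : ∃ q ∈ Icc a b, Q q = c := by
        have := intermediate_value_Icc' hab hQcont.continuousOn
        have hc' : c ∈ Icc (Q b) (Q a) := by
          rw [hQb]; exact ⟨hc0, hc.le⟩
        obtain ⟨q, hq, hQq⟩ := this hc'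
        exact ⟨q, hq, hQq⟩
      apply le_antisymm
      · -- upper bound via q'' = sInf
        set S := Q ⁻¹' Iic c ∩ Icc a b with hSdef
        have hSne : S.Nonempty := ⟨b, by simp [hSdef, Set.mem_preimage, hQb, hc0, hab]⟩
        have hSclosed : IsClosed S :=
          (IsClosed.preimage hQcont isClosed_Iic).inter isClosed_Icc
        have hSbdd : BddBelow S := ⟨a, fun u hu => hu.2.1⟩
        set q'' := sInf S with hq''
        have hq''mem : q'' ∈ S := hSclosed.csInf_mem hSne hSbdd
        have hsub : Q ⁻¹' Iic c ∩ Ioc a b ⊆ insert q'' (Ioc q'' b) := by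
          intro u hu
          have huS : u ∈ S := ⟨hu.1, hu.2.1.le, hu.2.2⟩
          have : q'' ≤ u := csInf_le hSbdd huS
          rcases eq_or_lt_of_le this with h | h
          · exact Or.inl h.symm
          · exact Or.inr ⟨h, hu.2.2⟩
        have hq''sing : μ {q''} = 0 := by
          rw [hμap _ (measurableSet_singleton q'')]
          apply le_antisymm _ zero_le
          calc ∫⁻ u in {q''} ∩ Ioc a b, ENNReal.ofReal (π u) ≤
              ∫⁻ u in {q''} ∩ Ioc a b, ⊤ := lintegral_mono (fun _ => le_top)
          _ = ⊤ * volume ({q''} ∩ Ioc a b) := by rw [setLIntegral_const]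
          _ ≤ ⊤ * volume {q''} := by
              gcongr; exact Set.inter_subset_left
          _ = 0 := by simp [Real.volume_singleton]
        calc μ (Q ⁻¹' Iic c)
            = μ (Q ⁻¹' Iic c ∩ Ioc a b) := by
              rw [hμap _ hS, hμap _ (hS.inter measurableSet_Ioc), Set.inter_assoc,
                Set.inter_self]
          _ ≤ μ (insert q'' (Ioc q'' b)) := measure_mono hsub
          _ ≤ μ {q''} + μ (Ioc q'' b) := by
              rw [Set.insert_eq]; exact measure_union_le _ _
          _ = μ (Ioc q'' b) := by rw [hq''sing, zero_add]
          _ = ENNReal.ofReal (Q q'') := hμIoc q'' hq''mem.2.1 hq''mem.2.2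
          _ ≤ ENNReal.ofReal c := ENNReal.ofReal_le_ofReal hq''mem.1
      · -- lower bound via Ioc q b
        rw [← hQq, ← hμIoc q hqmem.1 hqmem.2]
        apply measure_mono
        intro u hu
        simp only [Set.mem_preimage, Set.mem_Iic]
        exact hQanti hu.1.le
  -- conclude by change of variables
  have h1 : (∫ v in (0:ℝ)..A, g v) = ∫ v, g v ∂(μ.map Q) := by
    rw [hmap, intervalIntegral.integral_of_le hA0]
  have h2 : (∫ v, g v ∂(μ.map Q)) = ∫ u, g (Q u) ∂μ :=
    integral_map hQcont.aemeasurable hg.aestronglyMeasurable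
  have h3 : (∫ u, g (Q u) ∂μ) = ∫ u in Ioc a b, π u * g (Q u) := by
    have hofReal : (fun u => ENNReal.ofReal (π u)) =
        fun u => ((Real.toNNReal (π u) : ℝ≥0) : ℝ≥0∞) := rfl
    rw [hμ, hofReal,
      integral_withDensity_eq_integral_smul (hmeas.real_toNNReal) (fun u => g (Q u))]
    apply MeasureTheory.integral_congr_ae
    filter_upwards with u
    simp [NNReal.smul_def, Real.coe_toNNReal _ (hnn u)]
  rw [h1, h2, h3, intervalIntegral.integral_of_le hab]


lemma expint (ρ : ℝ) (hρ : ρ ≠ 0) (c A : ℝ) :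
    (∫ v in (0:ℝ)..A, c * Real.exp (ρ * v)) = c / ρ * (Real.exp (ρ * A) - 1) := by
  have hderiv : ∀ v ∈ Set.uIcc (0:ℝ) A,
      HasDerivAt (fun t => c / ρ * Real.exp (ρ * t)) (c * Real.exp (ρ * v)) v := by
    intro v _
    have h1 : HasDerivAt (fun t : ℝ => ρ * t) ρ v := by
      simpa using (hasDerivAt_id v).const_mul ρ
    have h2 : HasDerivAt (fun t : ℝ => Real.exp (ρ * t)) (Real.exp (ρ * v) * ρ) v :=
      (Real.hasDerivAt_exp (ρ * v)).comp v h1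
    have h3 := h2.const_mul (c / ρ)
    refine h3.congr_deriv ?_
    rw [mul_comm (Real.exp (ρ * v)) ρ, ← mul_assoc, div_mul_cancel₀ c hρ]
  rw [intervalIntegral.integral_eq_sub_of_hasDerivAt hderiv
    ((by continuity : Continuous fun v => c * Real.exp (ρ * v)).intervalIntegrable 0 A)]
  simp [Real.exp_zero]
  ring

end Aux

/-- The expected extra waiting time generated by a service,
`s(x) = b·exp(ρ·∫*_{ξ=x}^{y} π(ξ) dξ)`, satisfies the recursion
`s(x) = b + ρ·∫*_{u=x}^{y} π(u)·s(u) du` for all `x ∈ [0,1]`. -/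
theorem generated_waiting_time_recursion
    (ρ b : ℝ) (hρ : 0 < ρ) (hb : 0 < b)
    (π : ℝ → ℝ) (hπmeas : Measurable π)
    (hπnn : ∀ x ∈ Set.Icc (0 : ℝ) 1, 0 ≤ π x)
    (hπint : IntervalIntegrable π volume 0 1)
    (hπ1 : (∫ u in (0 : ℝ)..1, π u) = 1)
    (y : ℝ) (hy : y ∈ Set.Icc (0 : ℝ) 1)
    (s : ℝ → ℝ)
    (hs : ∀ x : ℝ, s x = b * Real.exp (ρ * cint x y π)) :
    ∀ x ∈ Set.Icc (0 : ℝ) 1,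
      s x = b + ρ * cint x y (fun u => π u * s u) := by
  intro x hx
  have hρ' : ρ ≠ 0 := ne_of_gt hρ
  set π₀ : ℝ → ℝ := (Set.Icc (0:ℝ) 1).indicator π with hπ₀
  have hπ₀meas : Measurable π₀ := hπmeas.indicator measurableSet_Icc
  have hπ₀nn : ∀ u, 0 ≤ π₀ u := by
    intro u; rw [hπ₀]
    by_cases h : u ∈ Set.Icc (0:ℝ) 1
    · rw [Set.indicator_of_mem h]; exact hπnn u h
    · rw [Set.indicator_of_notMem h]
  have hπ₀int : Integrable π₀ volume := by
    have h1 : IntegrableOn π (Set.Ioc (0:ℝ) 1) volume :=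
      (intervalIntegrable_iff_integrableOn_Ioc_of_le (by norm_num : (0:ℝ) ≤ 1)).mp hπint
    have h2 : IntegrableOn π (Set.Icc (0:ℝ) 1) volume :=
      (integrableOn_Icc_iff_integrableOn_Ioc).mpr h1
    exact h2.integrable_indicator measurableSet_Icc
  have hsub : ∀ p q : ℝ, p ∈ Set.Icc (0:ℝ) 1 → q ∈ Set.Icc (0:ℝ) 1 →
      Set.uIcc p q ⊆ Set.Icc (0:ℝ) 1 := by
    intro p q hp hq
    rw [← Set.uIcc_of_le (zero_le_one)]
    exact Set.uIcc_subset_uIcc (by rwa [Set.uIcc_of_le zero_le_one])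
      (by rwa [Set.uIcc_of_le zero_le_one])
  have hcongr : ∀ p q : ℝ, p ∈ Set.Icc (0:ℝ) 1 → q ∈ Set.Icc (0:ℝ) 1 →
      (∫ v in p..q, π₀ v) = ∫ v in p..q, π v := by
    intro p q hp hq
    apply intervalIntegral.integral_congr
    intro v hv
    exact Set.indicator_of_mem (hsub p q hp hq hv) π
  have key : ∀ p q : ℝ, p ≤ q → p ∈ Set.Icc (0:ℝ) 1 → q ∈ Set.Icc (0:ℝ) 1 → ∀ c : ℝ,
      (∫ u in p..q, π u * (c * Real.exp (ρ * ∫ v in u..q, π v)))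
        = c / ρ * (Real.exp (ρ * ∫ v in p..q, π v) - 1) := by
    intro p q hpq hp hq c
    have h1 : (∫ u in p..q, π u * (c * Real.exp (ρ * ∫ v in u..q, π v)))
        = ∫ u in p..q, π₀ u * ((fun v => c * Real.exp (ρ * v)) (∫ v in u..q, π₀ v)) := by
      apply intervalIntegral.integral_congr
      intro u hu
      have hu' : u ∈ Set.Icc (0:ℝ) 1 := hsub p q hp hq hu
      simp only
      rw [show π₀ u = π u from Set.indicator_of_mem hu' π, hcongr u q hu' hq]
    rw [h1, cint_core hpq π₀ hπ₀meas hπ₀nn hπ₀int (fun v => c * Real.exp (ρ * v))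
      (by continuity),
      hcongr p q hp hq, expint ρ hρ' c _]
  rw [hs x]
  by_cases hxy : x ≤ y
  · simp only [cint, if_pos hxy]
    have h2 : (∫ u in x..y, π u * s u)
        = ∫ u in x..y, π u * (b * Real.exp (ρ * ∫ v in u..y, π v)) := by
      apply intervalIntegral.integral_congr
      intro u hu
      rw [Set.uIcc_of_le hxy] at hu
      simp only [hs, cint, if_pos hu.2]
    rw [h2, key x y hxy hx hy b]
    field_simp
    ring
  · push_neg at hxy
    simp only [cint, if_neg (not_le.mpr hxy)]
    have h01 : (0:ℝ) ∈ Set.Icc (0:ℝ) 1 := by norm_num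
    have h11 : (1:ℝ) ∈ Set.Icc (0:ℝ) 1 := by norm_num
    have h2 : (∫ u in x..(1:ℝ), π u * s u)
        = ∫ u in x..(1:ℝ), π u * ((b * Real.exp (ρ * ∫ v in (0:ℝ)..y, π v))
            * Real.exp (ρ * ∫ v in u..(1:ℝ), π v)) := by
      apply intervalIntegral.integral_congr
      intro u hu
      rw [Set.uIcc_of_le hx.2] at hu
      simp only [hs, cint, if_neg (not_le.mpr (lt_of_lt_of_le hxy hu.1))]
      rw [mul_add, Real.exp_add]
      ring
    have h3 : (∫ u in (0:ℝ)..y, π u * s u)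
        = ∫ u in (0:ℝ)..y, π u * (b * Real.exp (ρ * ∫ v in u..y, π v)) := by
      apply intervalIntegral.integral_congr
      intro u hu
      rw [Set.uIcc_of_le hy.1] at hu
      simp only [hs, cint, if_pos hu.2]
    rw [h2, h3, key x 1 hx.2 hx h11 _, key 0 y hy.1 h01 hy b]
    rw [mul_add, Real.exp_add]
    field_simp
    ring
end

section
/- Let ρ > 0, let b > 0, and let π be a probability density on [0,1]. Define s : [0,1] → ℝ by s(x) = b·( exp( ρ + ρ·∫_x^1 π(ξ) dξ ) − ρ·(∫_x^1 π(ω) dω)·exp( ρ·∫_x^1 π(ξ) dξ ) ). Then for all x ∈ [0,1]: s(x) = b·( 1 + e^ρ − exp( ρ·∫_x^1 π(ξ) dξ ) ) + ρ·∫_{z=x}^{1} π(z)·s(z) dz. -/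
open MeasureTheory
open Set Topology Filter
open scoped ENNReal NNReal

lemma subst_key (π : ℝ → ℝ) (hπmeas : Measurable π)
    (hπnn : ∀ x ∈ Set.Icc (0 : ℝ) 1, 0 ≤ π x)
    (hπint : IntervalIntegrable π volume 0 1)
    (x : ℝ) (hx0 : 0 ≤ x) (hx1 : x ≤ 1)
    (g : ℝ → ℝ) (hg : Continuous g) :
    (∫ z in x..(1:ℝ), π z * g (∫ ξ in z..(1:ℝ), π ξ))
      = ∫ u in (0:ℝ)..(∫ ξ in x..(1:ℝ), π ξ), g u := by
  set F : ℝ → ℝ := fun z => ∫ ξ in z..(1:ℝ), π ξ with hF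
  set t : ℝ := F x with ht
  -- basic integrability facts
  have hsub : ∀ c ∈ Icc x 1, ∀ d ∈ Icc x 1, IntervalIntegrable π volume c d := by
    intro c hc d hd
    have h01 : Set.uIcc (0:ℝ) 1 = Set.Icc 0 1 := uIcc_of_le zero_le_one
    refine hπint.mono_set (uIcc_subset_uIcc ?_ ?_) <;> rw [h01]
    · exact ⟨hx0.trans hc.1, hc.2⟩
    · exact ⟨hx0.trans hd.1, hd.2⟩
  -- antitone on Icc x 1
  have hanti : ∀ c ∈ Icc x 1, ∀ d ∈ Icc x 1, c ≤ d → F d ≤ F c := by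
    intro c hc d hd hcd
    have h1 : F c = (∫ ξ in c..d, π ξ) + F d :=
      (intervalIntegral.integral_add_adjacent_intervals (hsub c hc d hd)
        (hsub d hd 1 (right_mem_Icc.2 hx1))).symm
    have h2 : 0 ≤ ∫ ξ in c..d, π ξ :=
      intervalIntegral.integral_nonneg hcd (fun u hu =>
        hπnn u ⟨(hx0.trans hc.1).trans hu.1, hu.2.trans hd.2⟩)
    linarith
  -- continuity of F on Icc x 1
  have hFcont : ContinuousOn F (Icc x 1) := by
    have h01 : Set.uIcc (0:ℝ) 1 = Set.Icc 0 1 := uIcc_of_le zero_le_one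
    have : IntegrableOn π (uIcc (0:ℝ) 1) volume := by
      rw [h01]
      exact (intervalIntegrable_iff_integrableOn_Icc_of_le zero_le_one).mp hπint
    have hc := intervalIntegral.continuousOn_primitive_interval_left (a := (0:ℝ)) (b := (1:ℝ)) this
    rw [h01] at hc
    exact hc.mono (Icc_subset_Icc hx0 le_rfl)
  have hF1 : F 1 = 0 := intervalIntegral.integral_same
  have ht0 : 0 ≤ t := by
    have := hanti x (left_mem_Icc.2 hx1) 1 (right_mem_Icc.2 hx1) hx1
    rw [hF1] at this; exact this
  -- the weighted measure
  set ν : Measure ℝ :=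
    (volume.restrict (Ioc x 1)).withDensity (fun z => ENNReal.ofReal (π z)) with hν
  have hνIoc : ∀ c ∈ Icc x 1, ν (Ioc c 1) = ENNReal.ofReal (F c) := by
    intro c hc
    rw [hν, withDensity_apply _ measurableSet_Ioc,
      Measure.restrict_restrict measurableSet_Ioc,
      inter_eq_left.mpr (Ioc_subset_Ioc_left hc.1)]
    have hInt : IntegrableOn π (Ioc c 1) volume := (hsub c hc 1 (right_mem_Icc.2 hx1)).1
    have hnn : 0 ≤ᵐ[volume.restrict (Ioc c 1)] π := by
      refine (ae_restrict_iff' measurableSet_Ioc).2 (Filter.Eventually.of_forall ?_)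
      exact fun z hz => hπnn z ⟨(hx0.trans hc.1).trans hz.1.le, hz.2⟩
    rw [← ofReal_integral_eq_lintegral_ofReal hInt hnn]
    congr 1
    rw [hF]
    exact (intervalIntegral.integral_of_le hc.2).symm
  have hνsing : ∀ c : ℝ, ν {c} = 0 := by
    intro c
    refine (withDensity_absolutelyContinuous _ _) ?_
    simp [Measure.restrict_apply]
  have hνfin : IsFiniteMeasure ν := by
    constructor
    have : ν univ = ν (Ioc x 1) := by
      rw [hν, withDensity_apply _ MeasurableSet.univ, withDensity_apply _ measurableSet_Ioc,
        Measure.restrict_restrict measurableSet_Ioc, Measure.restrict_univ,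
        inter_eq_left.mpr (Ioc_subset_Ioc_left le_rfl)]
    rw [this, hνIoc x (left_mem_Icc.2 hx1)]
    exact ENNReal.ofReal_lt_top
  have hFae : AEMeasurable F ν := by
    have h1 : AEMeasurable F (volume.restrict (Icc x 1)) :=
      hFcont.aemeasurable measurableSet_Icc
    have h2 : AEMeasurable F (volume.restrict (Ioc x 1)) :=
      h1.mono_measure (Measure.restrict_mono Ioc_subset_Icc_self le_rfl)
    exact h2.mono_ac (withDensity_absolutelyContinuous _ _)
  have hFz0 : ∀ z ∈ Icc x 1, 0 ≤ F z := by
    intro z hz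
    have := hanti z hz 1 (right_mem_Icc.2 hx1) hz.2
    rw [hF1] at this; exact this
  have hcompl : ν (Ioc x 1)ᶜ = 0 := by
    rw [hν, withDensity_apply _ measurableSet_Ioc.compl,
      Measure.restrict_restrict measurableSet_Ioc.compl, compl_inter_self]
    simp
  -- the pushforward of ν under F is Lebesgue measure on (0, t]
  haveI := hνfin
  have hmap : Measure.map F ν = volume.restrict (Ioc 0 t) := by
    refine Measure.ext_of_Iic _ _ (fun u => ?_)
    rw [Measure.map_apply_of_aemeasurable hFae measurableSet_Iic,
      Measure.restrict_apply measurableSet_Iic, inter_comm, Ioc_inter_Iic,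
      Real.volume_Ioc, sub_zero]
    rw [← measure_inter_conull (s := F ⁻¹' Iic u) hcompl]
    rcases lt_or_ge u 0 with hu | hu
    · have hempty : F ⁻¹' Iic u ∩ Ioc x 1 = ∅ := by
        refine eq_empty_of_forall_notMem fun z hz => ?_
        have h0 : 0 ≤ F z := hFz0 z ⟨hz.2.1.le, hz.2.2⟩
        exact absurd (hz.1.trans_lt hu) (not_lt.2 h0)
      rw [hempty, measure_empty, ENNReal.ofReal_eq_zero.2]
      exact (min_le_right t u).trans hu.le
    · -- u ≥ 0
      set T : Set ℝ := Icc x 1 ∩ F ⁻¹' Iic u with hT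
      have hTclosed : IsClosed T :=
        hFcont.preimage_isClosed_of_isClosed isClosed_Icc isClosed_Iic
      have hTne : T.Nonempty := ⟨1, right_mem_Icc.2 hx1, by simp [hF1, hu]⟩
      have hTbdd : BddBelow T := ⟨x, fun z hz => hz.1.1⟩
      set c : ℝ := sInf T with hc
      have hcT : c ∈ T := hTclosed.csInf_mem hTne hTbdd
      have hcIcc : c ∈ Icc x 1 := hcT.1
      have hcu : F c ≤ u := hcT.2
      have h1 : Ioc c 1 ⊆ F ⁻¹' Iic u ∩ Ioc x 1 := by
        intro z hz
        have hzIcc : z ∈ Icc x 1 := ⟨hcIcc.1.trans hz.1.le, hz.2⟩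
        exact ⟨le_trans (hanti c hcIcc z hzIcc hz.1.le) hcu,
          lt_of_le_of_lt hcIcc.1 hz.1, hz.2⟩
      have h2 : F ⁻¹' Iic u ∩ Ioc x 1 ⊆ Icc c 1 := by
        intro z hz
        exact ⟨csInf_le hTbdd ⟨⟨hz.2.1.le, hz.2.2⟩, hz.1⟩, hz.2.2⟩
      have hIccIoc : ν (Icc c 1) ≤ ν (Ioc c 1) := by
        calc ν (Icc c 1) ≤ ν ({c} ∪ Ioc c 1) := measure_mono (by
              intro z hz
              rcases eq_or_lt_of_le hz.1 with h | h
              · exact Or.inl (by simp [h.symm])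
              · exact Or.inr ⟨h, hz.2⟩)
          _ ≤ ν {c} + ν (Ioc c 1) := measure_union_le _ _
          _ = ν (Ioc c 1) := by rw [hνsing c, zero_add]
      have hval : ν (F ⁻¹' Iic u ∩ Ioc x 1) = ENNReal.ofReal (F c) := by
        refine le_antisymm ?_ ?_
        · rw [← hνIoc c hcIcc]
          exact le_trans (measure_mono h2) hIccIoc
        · rw [← hνIoc c hcIcc]
          exact measure_mono h1
      rw [hval]
      congr 1
      -- F c = min t u
      rcases le_or_gt t u with htu | htu
      · have hxT : x ∈ T := ⟨left_mem_Icc.2 hx1, le_trans (le_of_eq rfl) htu⟩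
        have hcx : c = x := le_antisymm (csInf_le hTbdd hxT) hcIcc.1
        rw [hcx, min_eq_left htu]
      · rw [min_eq_right htu.le]
        refine le_antisymm hcu ?_
        have hxc : x < c := by
          rcases eq_or_lt_of_le hcIcc.1 with h | h
          · exfalso; rw [← h] at hcu; exact absurd (lt_of_le_of_lt hcu htu) (lt_irrefl _)
          · exact h
        have hne : (𝓝[Ico x c] c).NeBot := right_nhdsWithin_Ico_neBot hxc
        have htend : Filter.Tendsto F (𝓝[Ico x c] c) (𝓝 (F c)) :=
          (hFcont c hcIcc).mono (fun z hz => ⟨hz.1, hz.2.le.trans hcIcc.2⟩)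
        refine ge_of_tendsto htend ?_
        refine eventually_nhdsWithin_of_forall fun z hz => ?_
        by_contra hlt
        push_neg at hlt
        have : z ∈ T := ⟨⟨hz.1, hz.2.le.trans hcIcc.2⟩, Set.mem_preimage.2 hlt.le⟩
        exact absurd (csInf_le hTbdd this) (not_le.2 hz.2)
  -- transfer the integral
  have hν' : ν = (volume.restrict (Ioc x 1)).withDensity
      (fun z => ((π z).toNNReal : ℝ≥0∞)) := by
    rw [hν]; congr 1
  have hgm : AEStronglyMeasurable g (Measure.map F ν) :=
    hg.aestronglyMeasurable
  have hmeasnn : Measurable fun z => (π z).toNNReal := hπmeas.real_toNNReal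
  show (∫ z in x..(1:ℝ), π z * g (F z)) = ∫ u in (0:ℝ)..t, g u
  calc (∫ z in x..(1:ℝ), π z * g (F z))
      = ∫ z in Ioc x 1, π z * g (F z) := intervalIntegral.integral_of_le hx1
    _ = ∫ z in Ioc x 1, ((π z).toNNReal : ℝ≥0) • g (F z) := by
        refine setIntegral_congr_fun measurableSet_Ioc (fun z hz => ?_)
        rw [NNReal.smul_def, Real.coe_toNNReal _ (hπnn z ⟨hx0.trans hz.1.le, hz.2⟩),
          smul_eq_mul]
    _ = ∫ z, g (F z) ∂ν := by
        rw [hν', integral_withDensity_eq_integral_smul hmeasnn]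
    _ = ∫ u, g u ∂(Measure.map F ν) := (integral_map hFae hgm).symm
    _ = ∫ u in Ioc 0 t, g u := by rw [hmap]
    _ = ∫ u in (0:ℝ)..t, g u := (intervalIntegral.integral_of_le ht0).symm


/-- The expected extra time to delivery generated by a service one cycle
earlier, `s(x) = b·(exp(ρ + ρ∫_x^1 π) − ρ·(∫_x^1 π)·exp(ρ∫_x^1 π))`, satisfies
the recursion `s(x) = b·(1 + e^ρ − exp(ρ∫_x^1 π)) + ρ·∫_x^1 π(z)·s(z) dz`. -/
theorem delivery_generated_time_recursion
    (ρ b : ℝ) (hρ : 0 < ρ) (hb : 0 < b)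
    (π : ℝ → ℝ) (hπmeas : Measurable π)
    (hπnn : ∀ x ∈ Set.Icc (0 : ℝ) 1, 0 ≤ π x)
    (hπint : IntervalIntegrable π volume 0 1)
    (hπ1 : (∫ u in (0 : ℝ)..1, π u) = 1)
    (s : ℝ → ℝ)
    (hs : ∀ x : ℝ,
      s x = b * (Real.exp (ρ + ρ * ∫ ξ in x..(1 : ℝ), π ξ)
        - ρ * (∫ ω in x..(1 : ℝ), π ω) * Real.exp (ρ * ∫ ξ in x..(1 : ℝ), π ξ))) :
    ∀ x ∈ Set.Icc (0 : ℝ) 1,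
      s x = b * (1 + Real.exp ρ - Real.exp (ρ * ∫ ξ in x..(1 : ℝ), π ξ))
        + ρ * ∫ z in x..(1 : ℝ), π z * s z := by
  intro x hx
  obtain ⟨hx0, hx1⟩ := hx
  set g : ℝ → ℝ := fun u => b * (Real.exp (ρ + ρ * u) - ρ * u * Real.exp (ρ * u)) with hg
  have hgc : Continuous g := by fun_prop
  have hcong : (∫ z in x..(1:ℝ), π z * s z)
      = ∫ z in x..(1:ℝ), π z * g (∫ ξ in z..(1:ℝ), π ξ) :=
    intervalIntegral.integral_congr (fun z _ => by rw [hs z])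
  rw [hs x, hcong, subst_key π hπmeas hπnn hπint x hx0 hx1 g hgc]
  set t : ℝ := ∫ ξ in x..(1:ℝ), π ξ with htdef
  have hG : ∀ u : ℝ, HasDerivAt
      (fun u : ℝ => b * (Real.exp (ρ + ρ*u)/ρ - u*Real.exp (ρ*u) + Real.exp (ρ*u)/ρ))
      (g u) u := by
    intro u
    have h1 : HasDerivAt (fun u : ℝ => ρ + ρ * u) ρ u := by
      simpa using ((hasDerivAt_id u).const_mul ρ).const_add ρ
    have h2 := h1.exp
    have h3 : HasDerivAt (fun u : ℝ => ρ * u) ρ u := by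
      simpa using (hasDerivAt_id u).const_mul ρ
    have h4 := h3.exp
    have h5 := (hasDerivAt_id u).mul h4
    have h6 := (((h2.div_const ρ).sub h5).add (h4.div_const ρ)).const_mul b
    refine h6.congr_deriv ?_
    simp only [hg, id_eq, mul_div_assoc, div_self hρ.ne', mul_one]
    ring
  have hFTC : (∫ u in (0:ℝ)..t, g u)
      = (b * (Real.exp (ρ + ρ*t)/ρ - t*Real.exp (ρ*t) + Real.exp (ρ*t)/ρ))
        - (b * (Real.exp (ρ + ρ*0)/ρ - 0*Real.exp (ρ*0) + Real.exp (ρ*0)/ρ)) :=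
    intervalIntegral.integral_eq_sub_of_hasDerivAt (fun u _ => hG u)
      (hgc.intervalIntegrable 0 t)
  rw [hFTC]
  simp only [Real.exp_add, mul_zero, Real.exp_zero]
  field_simp
  ring
end

section
/- Let ρ ∈ (0,1), let π be a bounded probability density on [0,1], and let b : [0,1]² → [0,∞) be bounded measurable with supremum norm ‖b‖_∞. If g : [0,1]² → ℝ is a bounded measurable solution of g(x,y) = ρ·π(y)·∫*_{u=x}^{y} [g(x,u) + g(y,u)] du + b(x,y) for all x, y ∈ [0,1], then for all x, y ∈ [0,1]: |g(x,y)| ≤ ‖b‖_∞ + (2ρ(1+ρ)·π(y)/(1−ρ))·‖b‖_∞. -/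
open MeasureTheory

/-- interval integrability from measurability and a bound on [0,1] -/
lemma ii_loc {f : ℝ → ℝ} {M : ℝ} (hf : Measurable f)
    (hM : ∀ u ∈ Set.Icc (0:ℝ) 1, |f u| ≤ M)
    {a b : ℝ} (ha : a ∈ Set.Icc (0:ℝ) 1) (hb : b ∈ Set.Icc (0:ℝ) 1) :
    IntervalIntegrable f volume a b := by
  have hsub : Set.uIoc a b ⊆ Set.Icc (0:ℝ) 1 := by
    intro u hu
    rcases hu with ⟨h1, h2⟩
    exact ⟨le_trans (le_min ha.1 hb.1) h1.le, le_trans h2 (max_le ha.2 hb.2)⟩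
  rw [intervalIntegrable_iff]
  apply Measure.integrableOn_of_bounded (M := M)
  · exact ne_of_lt (lt_of_le_of_lt (measure_mono hsub) measure_Icc_lt_top)
  · exact hf.aestronglyMeasurable
  · rw [ae_restrict_iff' measurableSet_uIoc]
    exact ae_of_all _ fun u hu => by simpa [Real.norm_eq_abs] using hM u (hsub hu)

lemma ii_glob {f : ℝ → ℝ} {M : ℝ} (hf : Measurable f) (hM : ∀ u, |f u| ≤ M)
    (a b : ℝ) : IntervalIntegrable f volume a b := by
  rw [intervalIntegrable_iff]
  apply Measure.integrableOn_of_bounded (M := M)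
  · exact ne_of_lt (lt_of_le_of_lt (measure_mono Set.uIoc_subset_uIcc)
      measure_Icc_lt_top)
  · exact hf.aestronglyMeasurable
  · exact ae_of_all _ fun u => by simpa [Real.norm_eq_abs] using hM u

/-- Key quadratic identity. -/
lemma key_sq {f : ℝ → ℝ} {M : ℝ} (hf : Measurable f) (hM : ∀ u, |f u| ≤ M)
    {a b : ℝ} (hab : a ≤ b) :
    (∫ u in a..b, f u * ∫ v in a..u, f v) = (∫ u in a..b, f u)^2 / 2 := by
  have hM0 : 0 ≤ M := le_trans (abs_nonneg _) (hM 0)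
  set μ : Measure ℝ := volume.restrict (Set.Ioc a b) with hμ
  haveI : IsFiniteMeasure μ := by
    constructor
    rw [hμ, Measure.restrict_apply_univ]
    exact measure_Ioc_lt_top
  set F : ℝ → ℝ → ℝ := fun u v => f u * ({p : ℝ × ℝ | p.2 ≤ p.1}.indicator
    (fun p => f p.2) (u, v)) with hFdef
  have hFm : Measurable (Function.uncurry F) := by
    apply Measurable.mul
    · exact hf.comp measurable_fst
    · exact (hf.comp measurable_snd).indicator (measurableSet_le measurable_snd measurable_fst)
  have hFI : Integrable (Function.uncurry F) (μ.prod μ) := by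
    refine ⟨hFm.aestronglyMeasurable, ?_⟩
    apply HasFiniteIntegral.of_bounded (C := M * M)
    apply ae_of_all
    rintro ⟨u, v⟩
    have h2 : |({p : ℝ × ℝ | p.2 ≤ p.1}.indicator (fun p => f p.2) (u, v))| ≤ M := by
      rw [Set.indicator_apply]
      split
      · exact hM v
      · simpa using hM0
    calc ‖Function.uncurry F (u, v)‖ = |f u| * |({p : ℝ × ℝ | p.2 ≤ p.1}.indicator
          (fun p => f p.2) (u, v))| := by
          simp [Function.uncurry, hFdef, Real.norm_eq_abs, abs_mul]
      _ ≤ M * M := mul_le_mul (hM u) h2 (abs_nonneg _) hM0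
  -- inner integral identification
  have hinner : ∀ u ∈ Set.Ioc a b, (∫ v, F u v ∂μ) = f u * ∫ v in a..u, f v := by
    intro u hu
    have h1 : (fun v => ({p : ℝ × ℝ | p.2 ≤ p.1}.indicator (fun p => f p.2) (u, v)))
        = (Set.Iic u).indicator f := by
      funext v
      simp [Set.indicator_apply, Set.mem_Iic]
    calc (∫ v, F u v ∂μ) = f u * ∫ v, ({p : ℝ × ℝ | p.2 ≤ p.1}.indicator
          (fun p => f p.2) (u, v)) ∂μ := by
          rw [hFdef]; exact integral_const_mul _ _
      _ = f u * ∫ v in a..u, f v := by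
          rw [h1, hμ, setIntegral_indicator measurableSet_Iic,
            intervalIntegral.integral_of_le hu.1.le]
          congr 1
          rw [Set.Ioc_inter_Iic, min_eq_right hu.2]
  -- express LHS as double integral
  set T : ℝ := ∫ v, f v ∂μ with hT
  have hTi : T = ∫ u in a..b, f u := by
    rw [hT, intervalIntegral.integral_of_le hab]
  have hLHS : (∫ u in a..b, f u * ∫ v in a..u, f v) = ∫ u, (∫ v, F u v ∂μ) ∂μ := by
    rw [intervalIntegral.integral_of_le hab]
    exact (setIntegral_congr_fun measurableSet_Ioc (fun u hu => (hinner u hu).symm))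
  have hswap : (∫ u, (∫ v, F u v ∂μ) ∂μ) = ∫ u, (∫ v, F v u ∂μ) ∂μ :=
    integral_integral_swap hFI
  have hI1 : Integrable (fun u => ∫ v, F u v ∂μ) μ := hFI.integral_prod_left
  have hI2 : Integrable (fun u => ∫ v, F v u ∂μ) μ := hFI.integral_prod_right
  have hsum : (∫ u, (∫ v, F u v ∂μ) ∂μ) + (∫ u, (∫ v, F v u ∂μ) ∂μ)
      = ∫ u, ((∫ v, F u v ∂μ) + (∫ v, F v u ∂μ)) ∂μ := (integral_add hI1 hI2).symm
  have hae1 : ∀ᵐ u ∂μ, Integrable (fun v => F u v) μ := hFI.prod_right_ae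
  have hae2 : ∀ᵐ u ∂μ, Integrable (fun v => F v u) μ := hFI.prod_left_ae
  have hptw : ∀ᵐ u ∂μ, ((∫ v, F u v ∂μ) + (∫ v, F v u ∂μ)) = f u * T := by
    filter_upwards [hae1, hae2] with u h1 h2
    have heq : (∫ v, F u v ∂μ) + (∫ v, F v u ∂μ) = ∫ v, (F u v + F v u) ∂μ :=
      (integral_add h1 h2).symm
    rw [heq]
    have hcong : ∀ᵐ v ∂μ, F u v + F v u = f u * f v := by
      have hnull : μ {u} = 0 :=
        le_antisymm (le_trans (Measure.restrict_apply_le _ _) (by simp)) zero_le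
      filter_upwards [measure_eq_zero_iff_ae_notMem.mp hnull] with v hv
      have hvu : v ≠ u := by simpa using hv
      rw [hFdef]
      simp only [Set.indicator_apply, Set.mem_setOf_eq]
      rcases lt_trichotomy v u with h | h | h
      · rw [if_pos h.le, if_neg (not_le.mpr h)]
        ring
      · exact absurd h hvu
      · rw [if_neg (not_le.mpr h), if_pos h.le]
        ring
    rw [integral_congr_ae hcong, integral_const_mul]
  have h2A : (∫ u, (∫ v, F u v ∂μ) ∂μ) + (∫ u, (∫ v, F v u ∂μ) ∂μ) = T * T := by
    rw [hsum, integral_congr_ae hptw, integral_mul_const]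
  rw [hLHS, hTi.symm]
  nlinarith [hswap, h2A]

lemma ii_bd {f : ℝ → ℝ} {M a b : ℝ} (hf : Measurable f)
    (hM : ∀ u ∈ Set.uIcc a b, |f u| ≤ M) : IntervalIntegrable f volume a b := by
  rw [intervalIntegrable_iff]
  apply Measure.integrableOn_of_bounded (M := M)
  · exact ne_of_lt (lt_of_le_of_lt (measure_mono Set.uIoc_subset_uIcc) measure_Icc_lt_top)
  · exact hf.aestronglyMeasurable
  · rw [ae_restrict_iff' measurableSet_uIoc]
    exact ae_of_all _ fun u hu => by
      simpa [Real.norm_eq_abs] using hM u (Set.uIoc_subset_uIcc hu)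

lemma q_cont {f : ℝ → ℝ} {M : ℝ} (hf : Measurable f) (hM : ∀ u, |f u| ≤ M) (a : ℝ) :
    Continuous (fun u => ∫ v in a..u, f v) :=
  intervalIntegral.continuous_primitive (fun c d => ii_glob hf hM c d) a

lemma q_bdd {f : ℝ → ℝ} {M : ℝ} (hf : Measurable f) (hM : ∀ u, |f u| ≤ M) (a u : ℝ) :
    |∫ v in a..u, f v| ≤ M * |u - a| := by
  have := intervalIntegral.norm_integral_le_of_norm_le_const
    (C := M) (f := f) (a := a) (b := u) (fun x _ => by simpa [Real.norm_eq_abs] using hM x)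
  simpa [Real.norm_eq_abs] using this

lemma ii_bound_fn {f : ℝ → ℝ} {M : ℝ} (hf : Measurable f) (hM : ∀ u, |f u| ≤ M)
    {a b : ℝ} (hab : a ≤ b) (r c₀ c₁ B : ℝ) :
    IntervalIntegrable (fun u => r * (f u * (c₀ + c₁ * ∫ v in a..u, f v)) + B)
      volume a b := by
  apply IntervalIntegrable.add _ intervalIntegrable_const
  apply ii_bd (M := |r| * (M * (|c₀| + |c₁| * (M * (b - a)))))
  · exact (measurable_const.mul (hf.mul (measurable_const.add
      (measurable_const.mul (q_cont hf hM a).measurable))))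
  · intro u hu
    rw [Set.uIcc_of_le hab] at hu
    have h1 : |∫ v in a..u, f v| ≤ M * (b - a) := by
      refine le_trans (q_bdd hf hM a u) ?_
      have hM0 : 0 ≤ M := le_trans (abs_nonneg _) (hM 0)
      have : |u - a| ≤ b - a := by
        rw [abs_of_nonneg (by linarith [hu.1])]
        linarith [hu.2]
      exact mul_le_mul_of_nonneg_left this hM0
    have h2 : |c₀ + c₁ * ∫ v in a..u, f v| ≤ |c₀| + |c₁| * (M * (b - a)) := by
      refine le_trans (abs_add_le _ _) ?_
      rw [abs_mul]
      exact add_le_add le_rfl (mul_le_mul_of_nonneg_left h1 (abs_nonneg _))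
    rw [abs_mul, abs_mul]
    exact mul_le_mul le_rfl (mul_le_mul (hM u) h2 (abs_nonneg _)
      (le_trans (abs_nonneg _) (hM 0))) (mul_nonneg (abs_nonneg _) (abs_nonneg _))
      (abs_nonneg _)

lemma key_affine {f : ℝ → ℝ} {M : ℝ} (hf : Measurable f) (hM : ∀ u, |f u| ≤ M)
    {a b : ℝ} (hab : a ≤ b) (r c₀ c₁ B : ℝ) :
    (∫ u in a..b, (r * (f u * (c₀ + c₁ * ∫ v in a..u, f v)) + B))
      = r * (c₀ * (∫ u in a..b, f u) + c₁ * ((∫ u in a..b, f u)^2/2)) + B * (b - a) := by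
  have hq := q_cont hf hM a
  have hif : IntervalIntegrable f volume a b := ii_glob hf hM a b
  have hifq : IntervalIntegrable (fun u => f u * ∫ v in a..u, f v) volume a b := by
    have := ii_bound_fn hf hM hab 1 0 1 0
    simpa using this
  have hsplit : (fun u => r * (f u * (c₀ + c₁ * ∫ v in a..u, f v)) + B)
      = fun u => ((r * c₀) * f u + (r * c₁) * (f u * ∫ v in a..u, f v)) + B := by
    funext u; ring
  rw [hsplit]
  rw [intervalIntegral.integral_add (((hif.const_mul _).add (hifq.const_mul _)))
    intervalIntegrable_const]
  rw [intervalIntegral.integral_add (hif.const_mul _) (hifq.const_mul _)]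
  rw [intervalIntegral.integral_const_mul, intervalIntegral.integral_const_mul]
  rw [key_sq hf hM hab, intervalIntegral.integral_const]
  rw [smul_eq_mul]
  ring

lemma main_bound
    (ρ : ℝ) (hρ : ρ ∈ Set.Ioo (0:ℝ) 1)
    (π : ℝ → ℝ) (hπmeas : Measurable π)
    (hπnn : ∀ u ∈ Set.Icc (0:ℝ) 1, 0 ≤ π u)
    (Mπ : ℝ) (hπbd : ∀ u ∈ Set.Icc (0:ℝ) 1, π u ≤ Mπ)
    (hπint : (∫ u in (0:ℝ)..1, π u) = 1)
    (b : ℝ → ℝ → ℝ) (B : ℝ) (hB0 : 0 ≤ B)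
    (hbB : ∀ x ∈ Set.Icc (0:ℝ) 1, ∀ y ∈ Set.Icc (0:ℝ) 1, |b x y| ≤ B)
    (g : ℝ → ℝ → ℝ) (hgmeas : Measurable (Function.uncurry g))
    (G : ℝ) (hG0 : 0 ≤ G)
    (hgG : ∀ x ∈ Set.Icc (0:ℝ) 1, ∀ y ∈ Set.Icc (0:ℝ) 1, |g x y| ≤ G)
    (heq : ∀ x ∈ Set.Icc (0:ℝ) 1, ∀ y ∈ Set.Icc (0:ℝ) 1,
      g x y = ρ * π y * cint x y (fun u => g x u + g y u) + b x y)
    (n : ℕ) :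
    ∀ x ∈ Set.Icc (0:ℝ) 1, ∀ y ∈ Set.Icc (0:ℝ) 1,
      |cint x y (fun u => g x u)| + |cint x y (fun u => g y u)|
        ≤ 2*B + (ρ*(2-ρ))^n * (2*G*ρ/(1-ρ)) * ((1-ρ)/ρ)
          + (4*ρ*B/(1-ρ) + (ρ*(2-ρ))^n * (2*G*ρ/(1-ρ)))
            * cint x y ((Set.Icc (0:ℝ) 1).indicator π) := by
  obtain ⟨hρ0, hρ1⟩ := hρ
  have h1ρ : 0 < 1 - ρ := by linarith
  set π₀ : ℝ → ℝ := (Set.Icc (0:ℝ) 1).indicator π with hπ₀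
  have hπ₀m : Measurable π₀ := hπmeas.indicator measurableSet_Icc
  set Mπ₀ : ℝ := max Mπ 0 with hMπ₀
  have hπ₀b : ∀ u, |π₀ u| ≤ Mπ₀ := by
    intro u
    rw [hπ₀, Set.indicator_apply]
    split
    · next h =>
        rw [abs_of_nonneg (hπnn u h)]
        exact le_max_of_le_left (hπbd u h)
    · next h =>
        simp only [abs_zero]
        exact le_max_right _ _
  have hπ₀nn : ∀ u, 0 ≤ π₀ u := by
    intro u
    rw [hπ₀, Set.indicator_apply]
    split
    · next h => exact hπnn u h
    · exact le_rfl
  have hππ₀ : ∀ u ∈ Set.Icc (0:ℝ) 1, π u = π₀ u := by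
    intro u hu
    rw [hπ₀, Set.indicator_of_mem hu]
  have iiπ₀ : ∀ a' b' : ℝ, IntervalIntegrable π₀ volume a' b' :=
    fun a' b' => ii_glob hπ₀m hπ₀b a' b'
  have htot : (∫ u in (0:ℝ)..1, π₀ u) = 1 := by
    rw [hπ₀, intervalIntegral.integral_of_le (by norm_num : (0:ℝ) ≤ 1),
      setIntegral_indicator measurableSet_Icc,
      Set.inter_eq_left.mpr Set.Ioc_subset_Icc_self,
      ← intervalIntegral.integral_of_le (by norm_num : (0:ℝ) ≤ 1)]
    exact hπint
  have gsec : ∀ w : ℝ, Measurable (fun u => g w u) := by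
    intro w
    have := hgmeas.comp ((measurable_const (a := w)).prodMk measurable_id)
    exact this
  have gii : ∀ w ∈ Set.Icc (0:ℝ) 1, ∀ a' ∈ Set.Icc (0:ℝ) 1, ∀ b' ∈ Set.Icc (0:ℝ) 1,
      IntervalIntegrable (fun u => g w u) volume a' b' := by
    intro w hw a' ha' b' hb'
    exact ii_loc (gsec w) (fun u hu => hgG w hw u hu) ha' hb'
  have h01 : (0:ℝ) ∈ Set.Icc (0:ℝ) 1 := by norm_num
  have h11 : (1:ℝ) ∈ Set.Icc (0:ℝ) 1 := by norm_num
  induction n with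
  | zero =>
    intro x hx y hy
    have habs : ∀ w ∈ Set.Icc (0:ℝ) 1, |cint x y (fun u => g w u)| ≤ G := by
      intro w hw
      unfold cint
      split
      · next hxy =>
        have h1 := intervalIntegral.norm_integral_le_of_norm_le_const (C := G)
          (f := fun u => g w u) (a := x) (b := y) (fun u hu => by
            rw [Real.norm_eq_abs]
            refine hgG w hw u ⟨?_, ?_⟩
            · rcases hu with ⟨h1, h2⟩
              exact le_trans (le_min hx.1 hy.1) h1.le
            · rcases hu with ⟨h1, h2⟩
              exact le_trans h2 (max_le hx.2 hy.2))
        rw [Real.norm_eq_abs] at h1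
        refine le_trans h1 ?_
        have : |y - x| ≤ 1 := by
          rw [abs_le]
          constructor <;> [linarith [hx.2, hy.1]; linarith [hx.1, hy.2]]
        nlinarith
      · next hxy =>
        have hyx : y < x := not_le.mp hxy
        have h1 := intervalIntegral.norm_integral_le_of_norm_le_const (C := G)
          (f := fun u => g w u) (a := x) (b := 1) (fun u hu => by
            rw [Real.norm_eq_abs]
            refine hgG w hw u ⟨?_, ?_⟩
            · rcases hu with ⟨h1', h2'⟩
              exact le_trans (le_min hx.1 (by norm_num)) h1'.le
            · rcases hu with ⟨h1', h2'⟩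
              exact le_trans h2' (max_le hx.2 (by norm_num)))
        have h2 := intervalIntegral.norm_integral_le_of_norm_le_const (C := G)
          (f := fun u => g w u) (a := 0) (b := y) (fun u hu => by
            rw [Real.norm_eq_abs]
            refine hgG w hw u ⟨?_, ?_⟩
            · rcases hu with ⟨h1', h2'⟩
              exact le_trans (le_min (le_refl 0) hy.1) h1'.le
            · rcases hu with ⟨h1', h2'⟩
              exact le_trans h2' (max_le (by norm_num) hy.2))
        rw [Real.norm_eq_abs] at h1 h2
        have e1 : |(1:ℝ) - x| = 1 - x := abs_of_nonneg (by linarith [hx.2])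
        have e2 : |y - 0| = y := by rw [sub_zero]; exact abs_of_nonneg hy.1
        rw [e1] at h1; rw [e2] at h2
        calc |(∫ u in x..1, g w u) + ∫ u in (0:ℝ)..y, g w u|
            ≤ |∫ u in x..1, g w u| + |∫ u in (0:ℝ)..y, g w u| := abs_add_le _ _
          _ ≤ G * (1 - x) + G * y := add_le_add h1 h2
          _ ≤ G := by nlinarith [hx.1, hy.1]
    have hp0 : 0 ≤ cint x y π₀ := by
      unfold cint
      split
      · next hxy => exact intervalIntegral.integral_nonneg hxy (fun u _ => hπ₀nn u)
      · next hxy =>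
        have hyx : y < x := not_le.mp hxy
        have i1 : (0:ℝ) ≤ ∫ u in x..1, π₀ u :=
          intervalIntegral.integral_nonneg hx.2 (fun u _ => hπ₀nn u)
        have i2 : (0:ℝ) ≤ ∫ u in (0:ℝ)..y, π₀ u :=
          intervalIntegral.integral_nonneg hy.1 (fun u _ => hπ₀nn u)
        linarith
    have hEδ : (2*G*ρ/(1-ρ)) * ((1-ρ)/ρ) = 2*G := by
      field_simp
    have hK0 : 0 ≤ 4*ρ*B/(1-ρ) := by positivity
    have hE0 : 0 ≤ 2*G*ρ/(1-ρ) := by positivity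
    rw [pow_zero, one_mul, hEδ]
    have := add_le_add (habs x hx) (habs y hy)
    nlinarith [mul_nonneg (add_nonneg hK0 hE0) hp0]
  | succ n IH =>
    intro x hx y hy
    set c : ℝ := ρ*(2-ρ) with hc
    set E₀ : ℝ := 2*G*ρ/(1-ρ) with hE₀def
    set K : ℝ := 4*ρ*B/(1-ρ) with hKdef
    set δ : ℝ := (1-ρ)/ρ with hδdef
    set E : ℝ := c^n * E₀ with hEdef
    have hc0 : 0 ≤ c := by rw [hc]; nlinarith
    have hE₀0 : 0 ≤ E₀ := by rw [hE₀def]; positivity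
    have hE0 : 0 ≤ E := by rw [hEdef]; exact mul_nonneg (pow_nonneg hc0 n) hE₀0
    have hK0 : 0 ≤ K := by rw [hKdef]; positivity
    have hδ0 : 0 ≤ δ := by rw [hδdef]; positivity
    set α : ℝ := 2*B + E*δ with hαdef
    set β : ℝ := K + E with hβdef
    have hα0 : 0 ≤ α := by rw [hαdef]; positivity
    have hβ0 : 0 ≤ β := by rw [hβdef]; positivity
    clear_value c E₀ K δ E α β
    have hpt : ∀ w ∈ Set.Icc (0:ℝ) 1, ∀ u ∈ Set.Icc (0:ℝ) 1,
        |g w u| ≤ ρ * (π₀ u * (α + β * cint w u π₀)) + B := by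
      intro w hw u hu
      have he := heq w hw u hu
      have hsplit : cint w u (fun v => g w v + g u v)
          = cint w u (fun v => g w v) + cint w u (fun v => g u v) := by
        unfold cint
        split
        · exact intervalIntegral.integral_add (gii w hw w hw u hu) (gii u hu w hw u hu)
        · rw [intervalIntegral.integral_add (gii w hw w hw 1 h11) (gii u hu w hw 1 h11),
              intervalIntegral.integral_add (gii w hw 0 h01 u hu) (gii u hu 0 h01 u hu)]
          ring
      have hY := IH w hw u hu
      have hπu0 : 0 ≤ π u := hπnn u hu
      have habsle : |cint w u (fun v => g w v) + cint w u (fun v => g u v)|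
          ≤ α + β * cint w u π₀ := le_trans (abs_add_le _ _) hY
      calc |g w u| = |ρ * π u * (cint w u (fun v => g w v) + cint w u (fun v => g u v))
            + b w u| := by rw [he, hsplit]
        _ ≤ ρ * π u * |cint w u (fun v => g w v) + cint w u (fun v => g u v)| + |b w u| := by
            refine le_trans (abs_add_le _ _) ?_
            rw [abs_mul, abs_of_nonneg (mul_nonneg hρ0.le hπu0)]
        _ ≤ ρ * π u * (α + β * cint w u π₀) + B :=
            add_le_add (mul_le_mul_of_nonneg_left habsle (mul_nonneg hρ0.le hπu0))
              (hbB w hw u hu)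
        _ = ρ * (π₀ u * (α + β * cint w u π₀)) + B := by rw [hππ₀ u hu]; ring
    have piece : ∀ w ∈ Set.Icc (0:ℝ) 1, ∀ a' ∈ Set.Icc (0:ℝ) 1, ∀ b' ∈ Set.Icc (0:ℝ) 1,
        ∀ k : ℝ, a' ≤ b' →
        (∀ u ∈ Set.Icc a' b', cint w u π₀ ≤ k + ∫ v in a'..u, π₀ v) →
        |∫ u in a'..b', g w u|
          ≤ ρ * ((α + β*k) * (∫ v in a'..b', π₀ v) + β * ((∫ v in a'..b', π₀ v)^2/2))
            + B * (b' - a') := by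
      intro w hw a' ha' b' hb' k hab hcond
      have h1 : |∫ u in a'..b', g w u| ≤ ∫ u in a'..b', |g w u| :=
        intervalIntegral.abs_integral_le_integral_abs hab
      have h2 : (∫ u in a'..b', |g w u|)
          ≤ ∫ u in a'..b', (ρ * (π₀ u * ((α + β*k) + β * ∫ v in a'..u, π₀ v)) + B) := by
        apply intervalIntegral.integral_mono_on hab
        · exact (gii w hw a' ha' b' hb').abs
        · exact ii_bound_fn hπ₀m hπ₀b hab ρ (α + β*k) β B
        · intro u hu
          have hu01 : u ∈ Set.Icc (0:ℝ) 1 := ⟨le_trans ha'.1 hu.1, le_trans hu.2 hb'.2⟩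
          have h3 := hpt w hw u hu01
          have h4 : β * cint w u π₀ ≤ β * (k + ∫ v in a'..u, π₀ v) :=
            mul_le_mul_of_nonneg_left (hcond u hu) hβ0
          have h5 : π₀ u * (α + β * cint w u π₀)
              ≤ π₀ u * ((α + β*k) + β * ∫ v in a'..u, π₀ v) := by
            apply mul_le_mul_of_nonneg_left _ (hπ₀nn u)
            linarith
          have h6 := mul_le_mul_of_nonneg_left h5 hρ0.le
          linarith
      rw [key_affine hπ₀m hπ₀b hab ρ (α + β*k) β B] at h2
      linarith
    have hcoef : ρ*(2*α+β) = K + c*E*δ + c*E := by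
      rw [hαdef, hβdef, hKdef, hδdef, hc]
      field_simp
      ring
    have hgoalEq : 2*B + c^(n+1)*E₀*δ + (K + c^(n+1)*E₀) * cint x y π₀
        = 2*B + c*E*δ + (K + c*E) * cint x y π₀ := by
      rw [hEdef, pow_succ]; ring
    rw [hgoalEq]
    rcases le_or_gt x y with hxy | hyx
    · -- case x ≤ y
      have hcx : cint x y (fun u => g x u) = ∫ u in x..y, g x u := by
        simp [cint, hxy]
      have hcy : cint x y (fun u => g y u) = ∫ u in x..y, g y u := by
        simp [cint, hxy]
      have hPxy : cint x y π₀ = ∫ v in x..y, π₀ v := by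
        simp [cint, hxy]
      set p : ℝ := ∫ v in x..y, π₀ v with hpdef
      have hp0 : 0 ≤ p := intervalIntegral.integral_nonneg hxy (fun u _ => hπ₀nn u)
      have hadj1 : (∫ v in (0:ℝ)..x, π₀ v) + (∫ v in x..y, π₀ v) = ∫ v in (0:ℝ)..y, π₀ v :=
        intervalIntegral.integral_add_adjacent_intervals (iiπ₀ 0 x) (iiπ₀ x y)
      have hadj2 : (∫ v in (0:ℝ)..y, π₀ v) + (∫ v in y..1, π₀ v) = ∫ v in (0:ℝ)..1, π₀ v :=
        intervalIntegral.integral_add_adjacent_intervals (iiπ₀ 0 y) (iiπ₀ y 1)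
      have hi0x : 0 ≤ ∫ v in (0:ℝ)..x, π₀ v :=
        intervalIntegral.integral_nonneg hx.1 (fun u _ => hπ₀nn u)
      have hiy1 : 0 ≤ ∫ v in y..1, π₀ v :=
        intervalIntegral.integral_nonneg hy.2 (fun u _ => hπ₀nn u)
      have hp1 : p ≤ 1 := by
        rw [htot] at hadj2
        linarith
      have hs := piece x hx x hx y hy 0 hxy (by
        intro u hu
        have : cint x u π₀ = ∫ v in x..u, π₀ v := by simp [cint, hu.1]
        rw [this]
        linarith)
      have ht := piece y hy x hx y hy (1-p) hxy (by
        intro u hu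
        rcases le_or_gt y u with hyu | huy
        · have huy' : u = y := le_antisymm hu.2 hyu
          rw [huy']
          have h0 : cint y y π₀ = 0 := by simp [cint]
          rw [h0]
          linarith
        · have hcyu : cint y u π₀ = (∫ v in y..1, π₀ v) + ∫ v in (0:ℝ)..u, π₀ v := by
            simp [cint, huy.not_ge]
          have a1 : (∫ v in (0:ℝ)..u, π₀ v) + (∫ v in u..y, π₀ v) = ∫ v in (0:ℝ)..y, π₀ v :=
            intervalIntegral.integral_add_adjacent_intervals (iiπ₀ 0 u) (iiπ₀ u y)
          have a2 : (∫ v in x..u, π₀ v) + (∫ v in u..y, π₀ v) = ∫ v in x..y, π₀ v :=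
            intervalIntegral.integral_add_adjacent_intervals (iiπ₀ x u) (iiπ₀ u y)
          rw [hcyu, htot] at *
          linarith [hadj2])
      rw [hcx, hcy, hPxy]
      have hyx1 : y - x ≤ 1 := by linarith [hx.1, hy.2]
      have hS : ρ*((α+β*0)*p + β*(p^2/2)) + B*(y-x)
            + (ρ*((α+β*(1-p))*p + β*(p^2/2)) + B*(y-x))
          = 2*B*(y-x) + (ρ*(2*α+β))*p := by ring
      have hcoefp : (ρ*(2*α+β))*p = K*p + (c*E*δ)*p + (c*E)*p := by
        rw [hcoef]; ring
      have hprod1 : 0 ≤ (c*E*δ)*(1-p) :=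
        mul_nonneg (mul_nonneg (mul_nonneg hc0 hE0) hδ0) (by linarith)
      have hprod2 : 0 ≤ B*(1-(y-x)) := mul_nonneg hB0 (by linarith)
      linarith [hs, ht, hS, hcoefp, hprod1, hprod2]
    · -- case y < x
      have hcx : cint x y (fun u => g x u)
          = (∫ u in x..1, g x u) + ∫ u in (0:ℝ)..y, g x u := by
        simp [cint, hyx.not_ge]
      have hcy : cint x y (fun u => g y u)
          = (∫ u in x..1, g y u) + ∫ u in (0:ℝ)..y, g y u := by
        simp [cint, hyx.not_ge]
      have hPxy : cint x y π₀ = (∫ v in x..1, π₀ v) + ∫ v in (0:ℝ)..y, π₀ v := by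
        simp [cint, hyx.not_ge]
      set cA : ℝ := ∫ v in x..1, π₀ v with hcAdef
      set d : ℝ := ∫ v in (0:ℝ)..y, π₀ v with hddef
      set e : ℝ := ∫ v in y..x, π₀ v with hedef
      have hcA0 : 0 ≤ cA := intervalIntegral.integral_nonneg hx.2 (fun u _ => hπ₀nn u)
      have hd0 : 0 ≤ d := intervalIntegral.integral_nonneg hy.1 (fun u _ => hπ₀nn u)
      have he0 : 0 ≤ e := intervalIntegral.integral_nonneg hyx.le (fun u _ => hπ₀nn u)
      have aa1 : d + e = ∫ v in (0:ℝ)..x, π₀ v :=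
        intervalIntegral.integral_add_adjacent_intervals (iiπ₀ 0 y) (iiπ₀ y x)
      have aa2 : (∫ v in (0:ℝ)..x, π₀ v) + cA = ∫ v in (0:ℝ)..1, π₀ v :=
        intervalIntegral.integral_add_adjacent_intervals (iiπ₀ 0 x) (iiπ₀ x 1)
      have hepd : e = 1 - (cA + d) := by
        rw [htot] at aa2
        linarith
      have hs1 := piece x hx x hx 1 h11 0 hx.2 (by
        intro u hu
        have : cint x u π₀ = ∫ v in x..u, π₀ v := by simp [cint, hu.1]
        rw [this]
        linarith)
      have hs2 := piece x hx 0 h01 y hy cA hy.1 (by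
        intro u hu
        have hux : ¬ x ≤ u := not_le.mpr (lt_of_le_of_lt hu.2 hyx)
        have : cint x u π₀ = (∫ v in x..1, π₀ v) + ∫ v in (0:ℝ)..u, π₀ v := by
          simp [cint, hux]
        rw [this])
      have ht1 := piece y hy x hx 1 h11 e hx.2 (by
        intro u hu
        have hyu : y ≤ u := le_trans hyx.le hu.1
        have h7 : cint y u π₀ = ∫ v in y..u, π₀ v := by simp [cint, hyu]
        have h8 : e + (∫ v in x..u, π₀ v) = ∫ v in y..u, π₀ v :=
          intervalIntegral.integral_add_adjacent_intervals (iiπ₀ y x) (iiπ₀ x u)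
        rw [h7]
        linarith)
      have ht2 := piece y hy 0 h01 y hy (e + cA) hy.1 (by
        intro u hu
        have hu0 : 0 ≤ ∫ v in (0:ℝ)..u, π₀ v :=
          intervalIntegral.integral_nonneg hu.1 (fun v _ => hπ₀nn v)
        rcases le_or_gt y u with hyu | huy
        · have huy' : u = y := le_antisymm hu.2 hyu
          rw [huy'] at hu0 ⊢
          have h0 : cint y y π₀ = 0 := by simp [cint]
          rw [h0]
          linarith
        · have h7 : cint y u π₀ = (∫ v in y..1, π₀ v) + ∫ v in (0:ℝ)..u, π₀ v := by
            simp [cint, huy.not_ge]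
          have h8 : e + cA = ∫ v in y..1, π₀ v :=
            intervalIntegral.integral_add_adjacent_intervals (iiπ₀ y x) (iiπ₀ x 1)
          rw [h7]
          linarith)
      rw [hcx, hcy, hPxy]
      rw [hepd] at ht1 ht2
      have hl1 : (1-x) + y ≤ 1 := by linarith
      have hl0 : (0:ℝ) ≤ (1-x) + y := by linarith [hx.2, hy.1]
      have habs1 : |(∫ u in x..1, g x u) + ∫ u in (0:ℝ)..y, g x u|
          ≤ |∫ u in x..1, g x u| + |∫ u in (0:ℝ)..y, g x u| := abs_add_le _ _
      have habs2 : |(∫ u in x..1, g y u) + ∫ u in (0:ℝ)..y, g y u|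
          ≤ |∫ u in x..1, g y u| + |∫ u in (0:ℝ)..y, g y u| := abs_add_le _ _
      have hS : (ρ*((α+β*0)*cA + β*(cA^2/2)) + B*(1-x))
            + (ρ*((α+β*cA)*d + β*(d^2/2)) + B*(y-0))
            + ((ρ*((α+β*(1-(cA+d)))*cA + β*(cA^2/2)) + B*(1-x))
            + (ρ*((α+β*((1-(cA+d))+cA))*d + β*(d^2/2)) + B*(y-0)))
          = 2*B*((1-x)+y) + (ρ*(2*α+β))*(cA+d) := by ring
      have hcoefp : (ρ*(2*α+β))*(cA+d) = K*(cA+d) + (c*E*δ)*(cA+d) + (c*E)*(cA+d) := by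
        rw [hcoef]; ring
      have hp1' : cA + d ≤ 1 := by linarith
      have hprod1 : 0 ≤ (c*E*δ)*(1-(cA+d)) :=
        mul_nonneg (mul_nonneg (mul_nonneg hc0 hE0) hδ0) (by linarith)
      have hprod2 : 0 ≤ B*(1-((1-x)+y)) := mul_nonneg hB0 (by linarith)
      linarith [hs1, hs2, ht1, ht2, habs1, habs2, hS, hcoefp, hprod1, hprod2]

/-- A priori bound for bounded measurable solutions of the circular integral
equation: `|g(x,y)| ≤ ‖b‖_∞ + (2ρ(1+ρ)π(y)/(1−ρ))·‖b‖_∞`. -/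
theorem a_priori_bound_for_g
    (ρ : ℝ) (hρ : ρ ∈ Set.Ioo (0 : ℝ) 1)
    (π : ℝ → ℝ) (hπmeas : Measurable π)
    (hπnn : ∀ x ∈ Set.Icc (0 : ℝ) 1, 0 ≤ π x)
    (hπbd : ∃ M : ℝ, ∀ x ∈ Set.Icc (0 : ℝ) 1, π x ≤ M)
    (hπint : (∫ u in (0 : ℝ)..1, π u) = 1)
    (b : ℝ → ℝ → ℝ)
    (hbmeas : Measurable (Function.uncurry b))
    (hbnn : ∀ x ∈ Set.Icc (0 : ℝ) 1, ∀ y ∈ Set.Icc (0 : ℝ) 1, 0 ≤ b x y)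
    (hbbd : ∃ M : ℝ, ∀ x ∈ Set.Icc (0 : ℝ) 1, ∀ y ∈ Set.Icc (0 : ℝ) 1, b x y ≤ M)
    (Bnorm : ℝ)
    (hBnorm : Bnorm = ⨆ q : Set.Icc (0 : ℝ) 1 × Set.Icc (0 : ℝ) 1,
      |b (q.1 : ℝ) (q.2 : ℝ)|)
    (g : ℝ → ℝ → ℝ)
    (hgmeas : Measurable (Function.uncurry g))
    (hgbd : ∃ M : ℝ, ∀ x ∈ Set.Icc (0 : ℝ) 1, ∀ y ∈ Set.Icc (0 : ℝ) 1, |g x y| ≤ M)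
    (heq : ∀ x ∈ Set.Icc (0 : ℝ) 1, ∀ y ∈ Set.Icc (0 : ℝ) 1,
      g x y = ρ * π y * cint x y (fun u => g x u + g y u) + b x y) :
    ∀ x ∈ Set.Icc (0 : ℝ) 1, ∀ y ∈ Set.Icc (0 : ℝ) 1,
      |g x y| ≤ Bnorm + 2 * ρ * (1 + ρ) * π y / (1 - ρ) * Bnorm := by
  have hρ0 : 0 < ρ := hρ.1
  have hρ1 : ρ < 1 := hρ.2
  have h1ρ : 0 < 1 - ρ := by linarith
  have h01 : (0:ℝ) ∈ Set.Icc (0:ℝ) 1 := by norm_num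
  have h11 : (1:ℝ) ∈ Set.Icc (0:ℝ) 1 := by norm_num
  haveI : Nonempty (Set.Icc (0:ℝ) 1) := ⟨⟨0, h01⟩⟩
  obtain ⟨Mb, hMb⟩ := hbbd
  have hbdd : BddAbove (Set.range fun q : Set.Icc (0:ℝ) 1 × Set.Icc (0:ℝ) 1
      => |b (q.1 : ℝ) (q.2 : ℝ)|) := by
    refine ⟨Mb, ?_⟩
    rintro v ⟨q, rfl⟩
    have h1 : |b (q.1 : ℝ) (q.2 : ℝ)| ≤ Mb := by
      rw [abs_of_nonneg (hbnn q.1 q.1.2 q.2 q.2.2)]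
      exact hMb q.1 q.1.2 q.2 q.2.2
    exact h1
  have hbB : ∀ x ∈ Set.Icc (0:ℝ) 1, ∀ y ∈ Set.Icc (0:ℝ) 1, |b x y| ≤ Bnorm := by
    intro x hx y hy
    rw [hBnorm]
    exact le_ciSup hbdd (⟨⟨x,hx⟩,⟨y,hy⟩⟩)
  have hB0 : 0 ≤ Bnorm := le_trans (abs_nonneg _) (hbB 0 h01 0 h01)
  obtain ⟨Mg, hMg⟩ := hgbd
  have hgG : ∀ x ∈ Set.Icc (0:ℝ) 1, ∀ y ∈ Set.Icc (0:ℝ) 1, |g x y| ≤ max Mg 0 :=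
    fun x hx y hy => le_trans (hMg x hx y hy) (le_max_left _ _)
  have hG0 : (0:ℝ) ≤ max Mg 0 := le_max_right _ _
  obtain ⟨Mπ, hMπ⟩ := hπbd
  intro x hx y hy
  have hmain := fun n : ℕ => main_bound ρ hρ π hπmeas hπnn Mπ hMπ hπint b Bnorm hB0 hbB
    g hgmeas (max Mg 0) hG0 hgG heq n x hx y hy
  set π₀ : ℝ → ℝ := (Set.Icc (0:ℝ) 1).indicator π with hπ₀
  have hπ₀m : Measurable π₀ := hπmeas.indicator measurableSet_Icc
  have hπ₀b : ∀ u, |π₀ u| ≤ max Mπ 0 := by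
    intro u
    rw [hπ₀, Set.indicator_apply]
    split
    · next h =>
        rw [abs_of_nonneg (hπnn u h)]
        exact le_max_of_le_left (hMπ u h)
    · next h =>
        simp only [abs_zero]
        exact le_max_right _ _
  have hπ₀nn : ∀ u, 0 ≤ π₀ u := by
    intro u
    rw [hπ₀, Set.indicator_apply]
    split
    · next h => exact hπnn u h
    · exact le_rfl
  have iiπ₀ : ∀ a' b' : ℝ, IntervalIntegrable π₀ volume a' b' :=
    fun a' b' => ii_glob hπ₀m hπ₀b a' b'
  have htot : (∫ u in (0:ℝ)..1, π₀ u) = 1 := by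
    rw [hπ₀, intervalIntegral.integral_of_le (by norm_num : (0:ℝ) ≤ 1),
      setIntegral_indicator measurableSet_Icc,
      Set.inter_eq_left.mpr Set.Ioc_subset_Icc_self,
      ← intervalIntegral.integral_of_le (by norm_num : (0:ℝ) ≤ 1)]
    exact hπint
  -- bounds on p := cint x y π₀
  have hp0 : 0 ≤ cint x y π₀ := by
    unfold cint
    split
    · next hxy => exact intervalIntegral.integral_nonneg hxy (fun u _ => hπ₀nn u)
    · next hxy =>
      have i1 : (0:ℝ) ≤ ∫ u in x..1, π₀ u :=
        intervalIntegral.integral_nonneg hx.2 (fun u _ => hπ₀nn u)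
      have i2 : (0:ℝ) ≤ ∫ u in (0:ℝ)..y, π₀ u :=
        intervalIntegral.integral_nonneg hy.1 (fun u _ => hπ₀nn u)
      linarith
  have hp1 : cint x y π₀ ≤ 1 := by
    unfold cint
    split
    · next hxy =>
      have hadj1 : (∫ v in (0:ℝ)..x, π₀ v) + (∫ v in x..y, π₀ v) = ∫ v in (0:ℝ)..y, π₀ v :=
        intervalIntegral.integral_add_adjacent_intervals (iiπ₀ 0 x) (iiπ₀ x y)
      have hadj2 : (∫ v in (0:ℝ)..y, π₀ v) + (∫ v in y..1, π₀ v) = ∫ v in (0:ℝ)..1, π₀ v :=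
        intervalIntegral.integral_add_adjacent_intervals (iiπ₀ 0 y) (iiπ₀ y 1)
      have hi0x : 0 ≤ ∫ v in (0:ℝ)..x, π₀ v :=
        intervalIntegral.integral_nonneg hx.1 (fun u _ => hπ₀nn u)
      have hiy1 : 0 ≤ ∫ v in y..1, π₀ v :=
        intervalIntegral.integral_nonneg hy.2 (fun u _ => hπ₀nn u)
      rw [htot] at hadj2
      linarith
    · next hxy =>
      have hyx : y < x := not_le.mp hxy
      have aa1 : (∫ v in (0:ℝ)..y, π₀ v) + (∫ v in y..x, π₀ v) = ∫ v in (0:ℝ)..x, π₀ v :=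
        intervalIntegral.integral_add_adjacent_intervals (iiπ₀ 0 y) (iiπ₀ y x)
      have aa2 : (∫ v in (0:ℝ)..x, π₀ v) + (∫ v in x..1, π₀ v) = ∫ v in (0:ℝ)..1, π₀ v :=
        intervalIntegral.integral_add_adjacent_intervals (iiπ₀ 0 x) (iiπ₀ x 1)
      have he0 : 0 ≤ ∫ v in y..x, π₀ v :=
        intervalIntegral.integral_nonneg hyx.le (fun u _ => hπ₀nn u)
      rw [htot] at aa2
      linarith
  -- uniform-in-n bound and passage to the limit
  set Y : ℝ := |cint x y (fun u => g x u)| + |cint x y (fun u => g y u)| with hY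
  set c : ℝ := ρ*(2-ρ) with hc
  have hc0 : 0 ≤ c := by rw [hc]; nlinarith
  have hc1 : c < 1 := by rw [hc]; nlinarith
  set C : ℝ := (2*(max Mg 0)*ρ/(1-ρ)) * ((1-ρ)/ρ) + (2*(max Mg 0)*ρ/(1-ρ)) with hCdef
  have hC0 : 0 ≤ C := by rw [hCdef]; positivity
  have hYn : ∀ n : ℕ, Y ≤ (2*Bnorm + 4*ρ*Bnorm/(1-ρ)) + c^n * C := by
    intro n
    have h := hmain n
    have hcn : 0 ≤ c^n := pow_nonneg hc0 n
    have hK0 : 0 ≤ 4*ρ*Bnorm/(1-ρ) := by positivity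
    have hE0 : 0 ≤ 2*(max Mg 0)*ρ/(1-ρ) := by positivity
    have h2 : (4*ρ*Bnorm/(1-ρ) + c^n * (2*(max Mg 0)*ρ/(1-ρ))) * cint x y π₀
        ≤ 4*ρ*Bnorm/(1-ρ) + c^n * (2*(max Mg 0)*ρ/(1-ρ)) := by
      have hco : 0 ≤ 4*ρ*Bnorm/(1-ρ) + c^n * (2*(max Mg 0)*ρ/(1-ρ)) :=
        add_nonneg hK0 (mul_nonneg hcn hE0)
      nlinarith [mul_nonneg hco (sub_nonneg.mpr hp1)]
    have h3 : c^n * (2*(max Mg 0)*ρ/(1-ρ)) * ((1-ρ)/ρ) ≤ c^n * ((2*(max Mg 0)*ρ/(1-ρ)) * ((1-ρ)/ρ)) := by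
      rw [mul_assoc]
    rw [hY, hCdef]
    nlinarith [h, h2]
  have htend : Filter.Tendsto (fun n : ℕ => (2*Bnorm + 4*ρ*Bnorm/(1-ρ)) + c^n * C)
      Filter.atTop (nhds ((2*Bnorm + 4*ρ*Bnorm/(1-ρ)) + 0)) := by
    apply Filter.Tendsto.const_add
    have := (tendsto_pow_atTop_nhds_zero_of_lt_one hc0 hc1).mul_const C
    simpa using this
  have hYlim : Y ≤ 2*Bnorm + 4*ρ*Bnorm/(1-ρ) := by
    have := ge_of_tendsto htend (Filter.Eventually.of_forall hYn)
    linarith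
  -- conclude
  have gsec : ∀ w : ℝ, Measurable (fun u => g w u) := by
    intro w
    have := hgmeas.comp ((measurable_const (a := w)).prodMk measurable_id)
    exact this
  have gii : ∀ w ∈ Set.Icc (0:ℝ) 1, ∀ a' ∈ Set.Icc (0:ℝ) 1, ∀ b' ∈ Set.Icc (0:ℝ) 1,
      IntervalIntegrable (fun u => g w u) volume a' b' := by
    intro w hw a' ha' b' hb'
    exact ii_loc (gsec w) (fun u hu => hgG w hw u hu) ha' hb'
  have hsplit : cint x y (fun v => g x v + g y v)
      = cint x y (fun v => g x v) + cint x y (fun v => g y v) := by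
    unfold cint
    split
    · exact intervalIntegral.integral_add (gii x hx x hx y hy) (gii y hy x hx y hy)
    · rw [intervalIntegral.integral_add (gii x hx x hx 1 h11) (gii y hy x hx 1 h11),
          intervalIntegral.integral_add (gii x hx 0 h01 y hy) (gii y hy 0 h01 y hy)]
      ring
  have hfin := heq x hx y hy
  have hπy0 : 0 ≤ π y := hπnn y hy
  have hstep : |g x y| ≤ ρ * π y * Y + Bnorm := by
    calc |g x y| = |ρ * π y * (cint x y (fun v => g x v) + cint x y (fun v => g y v))
          + b x y| := by rw [hfin, hsplit]
      _ ≤ ρ * π y * |cint x y (fun v => g x v) + cint x y (fun v => g y v)| + |b x y| := by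
          refine le_trans (abs_add_le _ _) ?_
          rw [abs_mul, abs_of_nonneg (mul_nonneg hρ0.le hπy0)]
      _ ≤ ρ * π y * Y + Bnorm := by
          refine add_le_add ?_ (hbB x hx y hy)
          refine mul_le_mul_of_nonneg_left ?_ (mul_nonneg hρ0.le hπy0)
          rw [hY]
          exact abs_add_le _ _
  have halg : ρ * π y * (2*Bnorm + 4*ρ*Bnorm/(1-ρ))
      = 2 * ρ * (1 + ρ) * π y / (1 - ρ) * Bnorm := by
    field_simp
    ring
  have hfin2 : ρ * π y * Y ≤ ρ * π y * (2*Bnorm + 4*ρ*Bnorm/(1-ρ)) :=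
    mul_le_mul_of_nonneg_left hYlim (mul_nonneg hρ0.le hπy0)
  clear_value Y c C
  linarith [hstep, hfin2, halg.le, halg.ge]
end
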